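/- arXiv:1306.2545 — 4 statements merged into one kernel-verified Lean document; each statement's English description precedes it below -/
import Mathlib

section
/- For m, n ≥ 0, the set Fun_Λ(𝒬^m, 𝒬^n) of Λ-functors from 𝒬^m to 𝒬^n is in bijection with the set of nondecreasing functions F : ℤ → ℤ satisfying F(x + m + 1) = F(x) + (n + 1) for all x ∈ ℤ, taken modulo the equivalence relation F ∼ F + (n + 1). The bijection sends the class of F to the Λ-functor which maps the vertex i mod (m+1) to F(i) mod (n+1) and maps the generating arrow i → i+1 to the unique path in 𝒬^n from F(i) mod (n+1) to F(i+1) mod (n+1) of length F(i+1) − F(i). Moreover, these bijections are compatible with composition: composition of Λ-functors corresponds to composition of representing functions ℤ → ℤ. (This identifies Fun_Λ(𝒬^m, 𝒬^n) with the Hom-set Hom_Λ(⟨m⟩, ⟨n⟩) of Connes' cyclic category in its standard combinatorial model, so that ⟨n⟩ ↦ 𝒬^n is a fully faithful embedding of the cyclic category into Λ-categories.) -/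
open CategoryTheory

abbrev CircVert (n : ℕ) := ZMod (n + 1)

instance circQuiver (n : ℕ) : Quiver (CircVert n) :=
  ⟨fun i j => PLift (j = i + 1)⟩

/-- The object of the path category `𝒬ⁿ` corresponding to a vertex. -/
abbrev vtx {n : ℕ} (i : CircVert n) : Paths (CircVert n) := i

/-- Length of a morphism in a path category. -/
def plen {V : Type*} [Quiver V] {a b : Paths V} (p : a ⟶ b) : ℕ :=
  Quiver.Path.length p

/-- The path of length `k` starting at `i` going around the circle. -/
def arc (n : ℕ) (i : CircVert n) : (k : ℕ) → Quiver.Path i (i + (k : ZMod (n + 1)))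
  | 0 => Quiver.Path.cast rfl (by simp) Quiver.Path.nil
  | k + 1 => (arc n i k).cons ⟨by push_cast; ring⟩

/-- The full-cycle endomorphism `w_i` of the vertex `i` in `𝒬ⁿ`. -/
def cycleW (n : ℕ) (i : CircVert n) : vtx i ⟶ vtx i :=
  Quiver.Path.cast rfl (by simp) (arc n i (n + 1))

/-- The shortest path `φ_{ij}` from `i` to `j` (the identity if `i = j`). -/
def shortPath (n : ℕ) (i j : CircVert n) : vtx i ⟶ vtx j :=
  Quiver.Path.cast rfl (by rw [ZMod.natCast_rightInverse (j - i)]; ring) (arc n i (j - i).val)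

/-- The generating arrow `i ⟶ i+1` of `𝒬ⁿ`. -/
def genHom (n : ℕ) (i : CircVert n) : vtx i ⟶ vtx (i + 1) :=
  Quiver.Hom.toPath ⟨rfl⟩

/-- Iteration (monoid power) of an endomorphism. -/
def endPow {C : Type*} [Category C] {X : C} (f : CategoryTheory.End X) (t : ℕ) :
    CategoryTheory.End X := f ^ t


/-- A `Λ`-functor between the path categories of circular quivers: a functor sending the
full-cycle endomorphism at each vertex to the full-cycle endomorphism at its image. -/
def IsCycFunctor {m n : ℕ} (F : Paths (CircVert m) ⥤ Paths (CircVert n)) : Prop :=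
  ∀ i : CircVert m, F.map (cycleW m i) = cycleW n (F.obj (vtx i))

/-- A representative of a morphism `⟨m⟩ → ⟨n⟩` of the cyclic category: a nondecreasing function
`F : ℤ → ℤ` satisfying `F(x + m + 1) = F(x) + (n + 1)`. -/
def CycRep (m n : ℕ) : Type :=
  {F : ℤ → ℤ // Monotone F ∧ ∀ x : ℤ, F (x + (m + 1 : ℤ)) = F x + (n + 1 : ℤ)}

/-- The equivalence relation `F ∼ F + (n + 1)` on representatives. -/
def cycSetoid (m n : ℕ) : Setoid (CycRep m n) where
  r F G := ∃ k : ℤ, ∀ x : ℤ, G.val x = F.val x + k * (n + 1 : ℤ)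
  iseqv := by
    constructor
    · exact fun F => ⟨0, by simp⟩
    · rintro F G ⟨k, h⟩; exact ⟨-k, fun x => by rw [h x]; ring⟩
    · rintro F G H ⟨k, h⟩ ⟨l, h'⟩; exact ⟨k + l, fun x => by rw [h' x, h x]; ring⟩

/-- Composition of representing functions. -/
def CycRep.comp {p m n : ℕ} (F : CycRep m n) (G : CycRep p m) : CycRep p n :=
  ⟨F.val ∘ G.val, F.prop.1.comp G.prop.1, fun x => by
    simp only [Function.comp_apply]
    rw [G.prop.2 x, F.prop.2 (G.val x)]⟩

/-- The generating arrow of `𝒬^m` from `x mod (m+1)` to `(x+1) mod (m+1)`, for `x : ℤ`. -/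
def genHomZ (m : ℕ) (x : ℤ) : vtx ((x : ZMod (m + 1))) ⟶ vtx (((x + 1 : ℤ) : ZMod (m + 1))) :=
  Quiver.Hom.toPath ⟨by push_cast; ring⟩

namespace CycAux

variable {m n : ℕ}

lemma length_cast {U : Type*} [Quiver U] {u v u' v' : U} (hu : u = u') (hv : v = v')
    (p : Quiver.Path u v) : (p.cast hu hv).length = p.length := by
  subst hu; subst hv; rfl

lemma plen_comp {a b c : Paths (CircVert n)} (p : a ⟶ b) (q : b ⟶ c) :
    plen (p ≫ q) = plen p + plen q :=
  Quiver.Path.length_comp p q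

lemma plen_id {a : Paths (CircVert n)} : plen (𝟙 a) = 0 := rfl

lemma plen_eqToHom {a b : Paths (CircVert n)} (h : a = b) : plen (eqToHom h) = 0 := by
  subst h; rfl

lemma plen_genHomZ (m : ℕ) (x : ℤ) : plen (genHomZ m x) = 1 := rfl

lemma path_endpoint {a b : CircVert n} (p : Quiver.Path a b) :
    b = a + (p.length : ZMod (n + 1)) := by
  induction p with
  | nil => simp
  | cons p e ih =>
    obtain ⟨he⟩ := e
    subst he
    rw [Quiver.Path.length_cons]
    push_cast
    conv_lhs => rw [ih]
    ring

lemma path_ext_aux {a : CircVert n} : ∀ {b : CircVert n} (p q : Quiver.Path a b),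
    p.length = q.length → p = q := by
  intro b p
  induction p with
  | nil =>
    intro q h
    cases q with
    | nil => rfl
    | cons q' f => simp at h
  | cons p' e ih =>
    intro q h
    cases q with
    | nil => simp at h
    | cons q' f =>
      obtain ⟨he⟩ := e
      obtain ⟨hf⟩ := f
      have hcc := add_right_cancel (he.symm.trans hf)
      subst hcc
      rw [ih q' (by simpa using h)]

lemma path_ext {a b : Paths (CircVert n)} (p q : a ⟶ b) (h : plen p = plen q) : p = q :=
  path_ext_aux p q h

lemma plen_conj {a b a' b' : Paths (CircVert n)} (ha : a' = a) (hb : b = b')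
    (p : a ⟶ b) : plen (eqToHom ha ≫ p ≫ eqToHom hb) = plen p := by
  subst ha; subst hb; simp [plen_comp, plen_eqToHom]

lemma path_ext' {a b a' b' : Paths (CircVert n)} (ha : a = a') (hb : b = b')
    (p : a ⟶ b) (q : a' ⟶ b') (h : plen p = plen q) :
    p = eqToHom ha ≫ q ≫ eqToHom hb.symm := by
  subst ha; subst hb
  simpa using path_ext p q (by simpa using h)

lemma arc_length (i : CircVert n) (k : ℕ) : (arc n i k).length = k := by
  induction k with
  | zero => simp [arc, length_cast]
  | succ k ih => simp [arc, ih]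

lemma plen_cycleW (i : CircVert n) : plen (cycleW n i) = n + 1 := by
  simp [cycleW, plen, length_cast, arc_length]


lemma cycShift (F : CycRep m n) (t x : ℤ) :
    F.val (x + t * (m + 1)) = F.val x + t * (n + 1) := by
  induction t using Int.induction_on with
  | zero => simp
  | succ k ih =>
    have h1 : x + (k + 1 : ℤ) * (m + 1) = (x + k * (m + 1)) + (m + 1 : ℤ) := by ring
    rw [h1, F.prop.2, ih]; ring
  | pred k ih =>
    have h1 : x + (-(k + 1) : ℤ) * (m + 1) + (m + 1 : ℤ) = x + (-k) * (m + 1) := by ring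
    have := F.prop.2 (x + (-(k + 1) : ℤ) * (m + 1))
    rw [h1, ih] at this
    ring_nf at this ⊢
    linarith

lemma cycCongrExists (F : CycRep m n) {x y : ℤ}
    (h : (x : ZMod (m + 1)) = (y : ZMod (m + 1))) :
    ∃ t : ℤ, y = x + t * (m + 1) ∧ F.val y = F.val x + t * (n + 1) := by
  have h2 : ((m + 1 : ℕ) : ℤ) ∣ y - x :=
    Int.ModEq.dvd ((ZMod.intCast_eq_intCast_iff x y (m + 1)).mp h)
  obtain ⟨t, ht⟩ := h2
  push_cast at ht
  refine ⟨t, by linear_combination ht, ?_⟩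
  have hy : y = x + t * (m + 1) := by linear_combination ht
  rw [hy]
  exact cycShift F t x

lemma cycCastCongr (F : CycRep m n) {x y : ℤ}
    (h : (x : ZMod (m + 1)) = (y : ZMod (m + 1))) :
    ((F.val x : ℤ) : ZMod (n + 1)) = ((F.val y : ℤ) : ZMod (n + 1)) := by
  obtain ⟨t, _, h2⟩ := cycCongrExists F h
  rw [h2]
  push_cast
  simp

lemma cycSubCongr (F : CycRep m n) {x y x' y' : ℤ}
    (hx : (x : ZMod (m + 1)) = (x' : ZMod (m + 1))) (hd : y - x = y' - x') :
    F.val y - F.val x = F.val y' - F.val x' := by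
  obtain ⟨t, h1, h2⟩ := cycCongrExists F hx
  have hy : y' = y + t * (m + 1) := by linear_combination h1 - hd
  have h3 : F.val y' = F.val y + t * (n + 1) := by rw [hy]; exact cycShift F t y
  linarith


lemma val_intCast (i : CircVert m) : (((ZMod.val i : ℕ) : ℤ) : ZMod (m + 1)) = i := by
  push_cast
  exact ZMod.natCast_rightInverse i

/-- Integer representative of a vertex. -/
def pv {m : ℕ} (a : Paths (CircVert m)) : ℤ := (ZMod.val (show CircVert m from a) : ℤ)

lemma pv_cast (a : Paths (CircVert m)) : ((pv a : ℤ) : ZMod (m + 1)) = (show CircVert m from a) :=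
  val_intCast _

def objF (F : CycRep m n) (i : CircVert m) : CircVert n :=
  ((F.val (ZMod.val i : ℤ) : ℤ) : ZMod (n + 1))

def lenF (F : CycRep m n) (i : CircVert m) : ℕ :=
  (F.val ((ZMod.val i : ℤ) + 1) - F.val (ZMod.val i : ℤ)).toNat

lemma lenF_coe (F : CycRep m n) (i : CircVert m) :
    (lenF F i : ℤ) = F.val ((ZMod.val i : ℤ) + 1) - F.val (ZMod.val i : ℤ) :=
  Int.toNat_of_nonneg (by simp only [sub_nonneg]; exact F.prop.1 (by linarith))

lemma objF_key (F : CycRep m n) {i j : CircVert m} (e : i ⟶ j) :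
    objF F i + ((lenF F i : ℕ) : ZMod (n + 1)) = objF F j := by
  obtain ⟨he⟩ := e
  have h1 : (((ZMod.val i : ℤ) + 1 : ℤ) : ZMod (m + 1)) = (((ZMod.val j : ℤ) : ℤ) : ZMod (m + 1)) := by
    push_cast
    rw [ZMod.natCast_rightInverse i, ZMod.natCast_rightInverse j, he]
  have h2 := cycCastCongr F h1
  have h3 := lenF_coe F i
  unfold objF
  rw [← h2]
  have h4 : ((lenF F i : ℕ) : ZMod (n + 1))
      = ((F.val ((ZMod.val i : ℤ) + 1) - F.val (ZMod.val i : ℤ) : ℤ) : ZMod (n + 1)) := by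
    rw [← h3]
    push_cast
    rfl
  rw [h4]
  push_cast
  ring

def prefF (F : CycRep m n) : Prefunctor (CircVert m) (Paths (CircVert n)) where
  obj i := vtx (objF F i)
  map {i j} e := Quiver.Path.cast rfl (objF_key F e) (arc n (objF F i) (lenF F i))

def toFun (F : CycRep m n) : Paths (CircVert m) ⥤ Paths (CircVert n) :=
  Paths.lift (prefF F)

lemma plen_prefF (F : CycRep m n) {i j : CircVert m} (e : i ⟶ j) :
    plen ((prefF F).map e) = lenF F i := by
  simp [prefF, plen, length_cast, arc_length]


lemma map_plen_aux (F : CycRep m n) {a : CircVert m} : ∀ {b : CircVert m} (p : Quiver.Path a b),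
    (plen ((toFun F).map (X := vtx a) (Y := vtx b) p) : ℤ)
      = F.val ((ZMod.val a : ℤ) + (p.length : ℤ)) - F.val (ZMod.val a : ℤ) := by
  intro b p
  induction p with
  | nil =>
    show ((0 : ℕ) : ℤ) = _
    simp
  | @cons b' c' p' e ih =>
    have hsplit : (toFun F).map (X := vtx a) (Y := vtx c') (p'.cons e)
        = (toFun F).map (X := vtx a) (Y := vtx b') p' ≫ (prefF F).map e := rfl
    erw [hsplit, plen_comp, plen_prefF, Quiver.Path.length_cons]
    have hb := path_endpoint p'
    have hcong : (((ZMod.val a : ℤ) + (p'.length : ℤ) : ℤ) : ZMod (m + 1))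
        = (((ZMod.val b' : ℤ) : ℤ) : ZMod (m + 1)) := by
      push_cast
      rw [ZMod.natCast_rightInverse a, ZMod.natCast_rightInverse b']
      exact hb.symm
    have hd := cycSubCongr F (x := (ZMod.val a : ℤ) + (p'.length : ℤ))
      (x' := (ZMod.val b' : ℤ)) (y := (ZMod.val a : ℤ) + (p'.length : ℤ) + 1)
      (y' := (ZMod.val b' : ℤ) + 1) hcong (by ring)
    have hl : ((lenF F (vtx b') : ℕ) : ℤ)
        = F.val ((ZMod.val b' : ℤ) + 1) - F.val (ZMod.val b' : ℤ) := lenF_coe F b'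
    push_cast
    rw [ih]
    have hassoc : (ZMod.val a : ℤ) + ((p'.length : ℤ) + 1)
        = (ZMod.val a : ℤ) + (p'.length : ℤ) + 1 := by ring
    rw [hassoc]
    linarith
lemma toFun_isCyc (F : CycRep m n) : IsCycFunctor (toFun F) := by
  intro i
  apply path_ext
  have h1 := map_plen_aux F (cycleW m i)
  have h2 : ((cycleW m i).length : ℤ) = ((m : ℤ) + 1) := by
    have := plen_cycleW (n := m) i
    exact_mod_cast this
  rw [h2] at h1
  have h3 := F.prop.2 (ZMod.val i : ℤ)
  have h4 : ((plen ((toFun F).map (cycleW m i)) : ℕ) : ℤ) = ((n : ℤ) + 1) := by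
    rw [h1, h3]; ring
  have h5 : plen (cycleW n ((toFun F).obj (vtx i))) = n + 1 := plen_cycleW _
  rw [h5]
  omega

lemma toFun_obj (F : CycRep m n) (x : ℤ) :
    (toFun F).obj (vtx ((x : ZMod (m + 1)))) = vtx ((F.val x : ZMod (n + 1))) := by
  show vtx (objF F ((x : ZMod (m + 1)))) = _
  unfold objF
  exact congrArg vtx (cycCastCongr F (by rw [val_intCast]))

lemma toFun_plen (F : CycRep m n) (x : ℤ) :
    plen ((toFun F).map (genHomZ m x)) = (F.val (x + 1) - F.val x).toNat := by
  unfold toFun genHomZ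
  erw [Paths.lift_toPath, plen_prefF]
  unfold lenF
  refine congrArg Int.toNat (cycSubCongr F ?_ (by ring))
  rw [val_intCast]

lemma toFun_welldef (F G : CycRep m n) (h : (cycSetoid m n).r F G) : toFun F = toFun G := by
  obtain ⟨k, hk⟩ := h
  have h_obj : (toFun F).obj = (toFun G).obj := by
    funext i
    show vtx (objF F i) = vtx (objF G i)
    unfold objF
    rw [hk]
    push_cast
    simp
  apply Paths.ext_functor h_obj
  intro a b e
  have hplen : plen ((toFun F).map e.toPath) = plen ((toFun G).map e.toPath) := by
    unfold toFun
    erw [Paths.lift_toPath, Paths.lift_toPath, plen_prefF, plen_prefF]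
    unfold lenF
    rw [hk, hk]
    congr 1
    ring
  exact path_ext' (congr_fun h_obj a) (congr_fun h_obj b) _ _ hplen

lemma vtx_inj {a b : CircVert n} (h : vtx a = vtx b) : a = b := h

lemma toFun_inj (F G : CycRep m n) (h : toFun F = toFun G) : (cycSetoid m n).r F G := by
  have hobj : ((F.val 0 : ℤ) : ZMod (n + 1)) = ((G.val 0 : ℤ) : ZMod (n + 1)) := by
    have := congrArg (fun Φ : Paths (CircVert m) ⥤ Paths (CircVert n) =>
      Φ.obj (vtx ((0 : ℤ) : ZMod (m + 1)))) h
    rw [toFun_obj F 0, toFun_obj G 0] at this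
    exact vtx_inj this
  have hdvd : ((n + 1 : ℕ) : ℤ) ∣ G.val 0 - F.val 0 :=
    Int.ModEq.dvd ((ZMod.intCast_eq_intCast_iff _ _ _).mp hobj)
  obtain ⟨k, hk⟩ := hdvd
  have hlen : ∀ x : ℤ, F.val (x + 1) - F.val x = G.val (x + 1) - G.val x := by
    intro x
    have h1 : plen ((toFun F).map (genHomZ m x)) = plen ((toFun G).map (genHomZ m x)) := by
      rw [h]
    rw [toFun_plen, toFun_plen] at h1
    have l1 : (0 : ℤ) ≤ F.val (x + 1) - F.val x := by
      simp only [sub_nonneg]; exact F.prop.1 (by linarith)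
    have l2 : (0 : ℤ) ≤ G.val (x + 1) - G.val x := by
      simp only [sub_nonneg]; exact G.prop.1 (by linarith)
    omega
  have hdiff : ∀ x : ℤ, G.val x - F.val x = G.val 0 - F.val 0 := by
    intro x
    induction x using Int.induction_on with
    | zero => rfl
    | succ j ih => have := hlen j; push_cast at *; linarith
    | pred j ih =>
      have h2 := hlen (-(j : ℤ) - 1)
      have harg : (-(j : ℤ) - 1) + 1 = -(j : ℤ) := by ring
      rw [harg] at h2
      push_cast at *
      linarith
  exact ⟨k, fun x => by have := hdiff x; push_cast at hk; linarith⟩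

lemma castM_zero : (((m : ℤ) + 1 : ℤ) : ZMod (m + 1)) = 0 := by
  exact_mod_cast ZMod.natCast_self (m + 1)

def arcZ (m : ℕ) (x : ℤ) : (k : ℕ) →
    (vtx ((x : ZMod (m + 1))) ⟶ vtx (((x + (k : ℕ) : ℤ) : ZMod (m + 1))))
  | 0 => eqToHom (congrArg vtx (by push_cast; ring))
  | k + 1 => arcZ m x k ≫ genHomZ m (x + (k : ℕ)) ≫ eqToHom (congrArg vtx (by push_cast; ring))

lemma plen_arcZ (x : ℤ) (k : ℕ) : plen (arcZ m x k) = k := by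
  induction k with
  | zero => simp [arcZ, plen_eqToHom]
  | succ k ih => simp [arcZ, plen_comp, plen_eqToHom, plen_genHomZ, ih]

variable (Φ : Paths (CircVert m) ⥤ Paths (CircVert n))

def lenφ (x : ℤ) : ℕ := plen (Φ.map (genHomZ m x))

lemma lenφ_congr {x y : ℤ} (hxy : (x : ZMod (m + 1)) = (y : ZMod (m + 1))) :
    lenφ Φ x = lenφ Φ y := by
  have hb : (((x + 1 : ℤ)) : ZMod (m + 1)) = (((y + 1 : ℤ)) : ZMod (m + 1)) := by
    push_cast at hxy ⊢
    rw [hxy]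
  have h1 : genHomZ m x = eqToHom (congrArg vtx hxy) ≫ genHomZ m y
      ≫ eqToHom (congrArg vtx hb.symm) := by
    refine path_ext' (congrArg vtx hxy) (congrArg vtx hb) _ _ ?_
    rfl
  unfold lenφ
  rw [h1]
  simp [Functor.map_comp, eqToHom_map, plen_comp, plen_eqToHom]

lemma map_arcZ_succ (x : ℤ) (k : ℕ) :
    plen (Φ.map (arcZ m x (k + 1))) = plen (Φ.map (arcZ m x k)) + lenφ Φ (x + (k : ℕ)) := by
  show plen (Φ.map (arcZ m x k ≫ genHomZ m (x + (k : ℕ)) ≫ eqToHom _)) = _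
  simp [Functor.map_comp, eqToHom_map, plen_comp, plen_eqToHom, lenφ]

lemma map_arcZ_cycle (hΦ : IsCycFunctor Φ) (x : ℤ) :
    plen (Φ.map (arcZ m x (m + 1))) = n + 1 := by
  have hb : (((x + ((m + 1 : ℕ) : ℤ) : ℤ)) : ZMod (m + 1)) = ((x : ℤ) : ZMod (m + 1)) := by
    push_cast
    rw [show ((x : ZMod (m + 1)) + ((m : ZMod (m + 1)) + 1) = x + (((m : ℤ) + 1 : ℤ) : ZMod (m + 1))) from by push_cast; ring, castM_zero]
    ring
  have h1 : arcZ m x (m + 1) = eqToHom rfl ≫ cycleW m ((x : ZMod (m + 1)))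
      ≫ eqToHom (congrArg vtx hb).symm := by
    refine path_ext' rfl (congrArg vtx hb) _ _ ?_
    rw [plen_arcZ, plen_cycleW]
  rw [h1]
  simp only [Functor.map_comp, eqToHom_map, plen_comp, plen_eqToHom, eqToHom_refl]
  erw [hΦ ((x : ZMod (m + 1))), plen_cycleW]
  simp [plen_eqToHom, plen_comp, plen_id]

lemma castM_zero' : ((m : ZMod (m + 1)) + 1 : ZMod (m + 1)) = 0 := by
  have := ZMod.natCast_self (m + 1)
  push_cast at this
  exact this

lemma cast_emod (x : ℤ) : ((x % ((m : ℤ) + 1) : ℤ) : ZMod (m + 1)) = (x : ZMod (m + 1)) := by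
  conv_rhs => rw [← Int.mul_ediv_add_emod x ((m : ℤ) + 1)]
  push_cast
  rw [castM_zero']
  ring

lemma lenφ_emod (x : ℤ) : lenφ Φ (x % ((m : ℤ) + 1)) = lenφ Φ x :=
  lenφ_congr Φ (cast_emod x)

def zphi : ℤ := (ZMod.val (show CircVert n from Φ.obj (vtx (((0 : ℤ) : ZMod (m + 1))))) : ℤ)

def gphi (k : ℕ) : ℤ := zphi Φ + (plen (Φ.map (arcZ m 0 k)) : ℤ)

lemma gphi_zero : gphi Φ 0 = zphi Φ := by
  unfold gphi
  simp [arcZ, eqToHom_map, plen_eqToHom, plen_id]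

lemma gphi_succ (k : ℕ) : gphi Φ (k + 1) = gphi Φ k + (lenφ Φ ((k : ℕ) : ℤ) : ℤ) := by
  unfold gphi
  rw [map_arcZ_succ]
  have h0 : lenφ Φ ((0 : ℤ) + ((k : ℕ) : ℤ)) = lenφ Φ ((k : ℕ) : ℤ) := by norm_num
  rw [h0]
  push_cast
  ring

lemma gphi_cycle (hΦ : IsCycFunctor Φ) : gphi Φ (m + 1) = zphi Φ + ((n : ℤ) + 1) := by
  unfold gphi
  rw [map_arcZ_cycle Φ hΦ]
  push_cast
  ring

def Fphi : ℤ → ℤ := fun x =>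
  gphi Φ (x % ((m : ℤ) + 1)).toNat + (x / ((m : ℤ) + 1)) * ((n : ℤ) + 1)

lemma Fphi_succ (hΦ : IsCycFunctor Φ) (x : ℤ) :
    Fphi Φ (x + 1) = Fphi Φ x + (lenφ Φ x : ℤ) := by
  have hM0 : ((m : ℤ) + 1) ≠ 0 := by positivity
  have hr0 : 0 ≤ x % ((m : ℤ) + 1) := Int.emod_nonneg x hM0
  have hrM : x % ((m : ℤ) + 1) < (m : ℤ) + 1 := Int.emod_lt_of_pos x (by positivity)
  have hx : ((m : ℤ) + 1) * (x / ((m : ℤ) + 1)) + x % ((m : ℤ) + 1) = x :=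
    Int.mul_ediv_add_emod x _
  by_cases hcase : x % ((m : ℤ) + 1) = (m : ℤ)
  · have hx1 : x + 1 = ((m : ℤ) + 1) * (x / ((m : ℤ) + 1) + 1) := by
      rw [mul_add, mul_one]
      linarith
    have e1 : (x + 1) % ((m : ℤ) + 1) = 0 := by
      rw [hx1]; exact Int.mul_emod_right _ _
    have e2 : (x + 1) / ((m : ℤ) + 1) = x / ((m : ℤ) + 1) + 1 := by
      rw [hx1]; exact Int.mul_ediv_cancel_left _ hM0
    have hl : lenφ Φ ((m : ℤ)) = lenφ Φ x := by
      refine lenφ_congr Φ ?_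
      have := cast_emod (m := m) x
      rw [hcase] at this
      exact this
    have hl' : ((lenφ Φ ((m : ℤ)) : ℕ) : ℤ) = ((lenφ Φ x : ℕ) : ℤ) := by exact_mod_cast hl
    have hg1 := gphi_succ Φ m
    have hg2 := gphi_cycle Φ hΦ
    have hg0 := gphi_zero Φ
    unfold Fphi
    rw [e1, e2, hcase, add_mul, one_mul]
    simp only [Int.toNat_zero, Int.toNat_natCast]
    push_cast at hg1 ⊢
    linarith
  · have hrm : x % ((m : ℤ) + 1) < (m : ℤ) := lt_of_le_of_ne (by omega) hcase
    have hx1 : x + 1 = (x % ((m : ℤ) + 1) + 1) + ((m : ℤ) + 1) * (x / ((m : ℤ) + 1)) := by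
      linarith
    have e1 : (x + 1) % ((m : ℤ) + 1) = x % ((m : ℤ) + 1) + 1 := by
      rw [hx1, Int.add_mul_emod_self_left, Int.emod_eq_of_lt (by omega) (by omega)]
    have e2 : (x + 1) / ((m : ℤ) + 1) = x / ((m : ℤ) + 1) := by
      rw [hx1, Int.add_mul_ediv_left _ _ hM0, Int.ediv_eq_zero_of_lt (by omega) (by omega)]
      ring
    have ht : (x % ((m : ℤ) + 1) + 1).toNat = (x % ((m : ℤ) + 1)).toNat + 1 := by omega
    have hl : lenφ Φ ((((x % ((m : ℤ) + 1)).toNat : ℕ)) : ℤ) = lenφ Φ x := by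
      have h1 : (((x % ((m : ℤ) + 1)).toNat : ℕ) : ℤ) = x % ((m : ℤ) + 1) :=
        Int.toNat_of_nonneg hr0
      rw [h1]
      exact lenφ_emod Φ x
    have hl' : ((lenφ Φ ((((x % ((m : ℤ) + 1)).toNat : ℕ)) : ℤ) : ℕ) : ℤ)
        = ((lenφ Φ x : ℕ) : ℤ) := by exact_mod_cast hl
    have hg1 := gphi_succ Φ (x % ((m : ℤ) + 1)).toNat
    unfold Fphi
    rw [e1, e2, ht]
    linarith

lemma Fphi_period (x : ℤ) : Fphi Φ (x + ((m : ℤ) + 1)) = Fphi Φ x + ((n : ℤ) + 1) := by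
  have hM0 : ((m : ℤ) + 1) ≠ 0 := by positivity
  have hrw : x + ((m : ℤ) + 1) = x + ((m : ℤ) + 1) * 1 := by ring
  have e1 : (x + ((m : ℤ) + 1)) % ((m : ℤ) + 1) = x % ((m : ℤ) + 1) := by
    rw [hrw, Int.add_mul_emod_self_left]
  have e2 : (x + ((m : ℤ) + 1)) / ((m : ℤ) + 1) = x / ((m : ℤ) + 1) + 1 := by
    rw [hrw, Int.add_mul_ediv_left _ _ hM0]
  unfold Fphi
  rw [e1, e2]
  ring

def FphiRep (hΦ : IsCycFunctor Φ) : CycRep m n :=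
  ⟨Fphi Φ, monotone_int_of_le_succ (fun x => by
      rw [Fphi_succ Φ hΦ]
      exact le_add_of_nonneg_right (by positivity)),
    fun x => Fphi_period Φ x⟩

lemma plen_toPath' {a b : CircVert n} (e : a ⟶ b) :
    plen (a := vtx a) (b := vtx b) e.toPath = 1 := rfl

lemma zphi_cast : ((zphi Φ : ℤ) : ZMod (n + 1))
    = (show CircVert n from Φ.obj (vtx (((0 : ℤ) : ZMod (m + 1))))) :=
  val_intCast _

lemma obj_gphi (k : ℕ) :
    Φ.obj (vtx ((((k : ℕ) : ℤ) : ZMod (m + 1)))) = vtx (((gphi Φ k : ℤ) : ZMod (n + 1))) := by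
  have hp := path_endpoint (Φ.map (arcZ m 0 k))
  have harg : (((0 : ℤ) + (k : ℕ) : ℤ) : ZMod (m + 1)) = (((k : ℕ) : ℤ) : ZMod (m + 1)) := by
    norm_num
  have h2 : Φ.obj (vtx ((((k : ℕ) : ℤ) : ZMod (m + 1))))
      = Φ.obj (vtx ((((0 : ℤ) + (k : ℕ) : ℤ) : ZMod (m + 1)))) :=
    (congrArg (fun z : CircVert m => Φ.obj (vtx z)) harg).symm
  rw [h2]
  show _ = ((gphi Φ k : ℤ) : ZMod (n + 1))
  have hz := zphi_cast Φ
  unfold gphi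
  push_cast
  rw [hz]
  have hp2 := path_endpoint (Φ.map (arcZ m 0 k))
  push_cast at hp2
  exact hp2

lemma obj_Fphi (hΦ : IsCycFunctor Φ) (x : ℤ) :
    Φ.obj (vtx ((x : ZMod (m + 1)))) = vtx (((Fphi Φ x : ℤ) : ZMod (n + 1))) := by
  have hk : (ZMod.val ((x : ZMod (m + 1))) : ℕ) < m + 1 := ZMod.val_lt _
  have hFg : Fphi Φ ((ZMod.val ((x : ZMod (m + 1))) : ℕ) : ℤ)
      = gphi Φ (ZMod.val ((x : ZMod (m + 1)))) := by
    unfold Fphi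
    have e1 : ((ZMod.val ((x : ZMod (m + 1))) : ℕ) : ℤ) % ((m : ℤ) + 1)
        = ((ZMod.val ((x : ZMod (m + 1))) : ℕ) : ℤ) :=
      Int.emod_eq_of_lt (by positivity) (by exact_mod_cast hk)
    have e2 : ((ZMod.val ((x : ZMod (m + 1))) : ℕ) : ℤ) / ((m : ℤ) + 1) = 0 :=
      Int.ediv_eq_zero_of_lt (by positivity) (by exact_mod_cast hk)
    rw [e1, e2, Int.toNat_natCast]
    ring
  have harg : (((ZMod.val ((x : ZMod (m + 1))) : ℕ) : ℤ) : ZMod (m + 1)) = (x : ZMod (m + 1)) :=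
    val_intCast _
  have h1 := obj_gphi Φ (ZMod.val ((x : ZMod (m + 1))))
  have h2 : ((Fphi Φ ((ZMod.val ((x : ZMod (m + 1))) : ℕ) : ℤ) : ℤ) : ZMod (n + 1))
      = ((Fphi Φ x : ℤ) : ZMod (n + 1)) := cycCastCongr (FphiRep Φ hΦ) harg
  have h3 : Φ.obj (vtx ((x : ZMod (m + 1))))
      = Φ.obj (vtx ((((ZMod.val ((x : ZMod (m + 1))) : ℕ) : ℤ) : ZMod (m + 1)))) :=
    (congrArg (fun z : CircVert m => Φ.obj (vtx z)) harg).symm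
  rw [h3, h1, ← hFg]
  exact congrArg vtx h2

lemma toFun_Fphi (hΦ : IsCycFunctor Φ) : toFun (FphiRep Φ hΦ) = Φ := by
  have h_obj : (toFun (FphiRep Φ hΦ)).obj = Φ.obj := by
    funext i
    obtain ⟨iv, rfl⟩ : ∃ j : CircVert m, vtx j = i := ⟨i, rfl⟩
    have harg : (((ZMod.val iv : ℕ) : ℤ) : ZMod (m + 1)) = iv := val_intCast iv
    have h1 := obj_Fphi Φ hΦ ((ZMod.val iv : ℕ) : ℤ)
    rw [harg] at h1
    exact h1.symm
  apply Paths.ext_functor h_obj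
  intro a b e
  obtain ⟨he⟩ := e
  have harga : (((ZMod.val a : ℕ) : ℤ) : ZMod (m + 1)) = a := val_intCast a
  have hargb : ((((ZMod.val a : ℕ) : ℤ) + 1 : ℤ) : ZMod (m + 1)) = b := by
    push_cast
    push_cast at harga
    rw [harga, he]
  have h1 : genHomZ m ((ZMod.val a : ℕ) : ℤ)
      = eqToHom (congrArg vtx harga) ≫ Quiver.Hom.toPath ⟨he⟩
        ≫ eqToHom (congrArg vtx hargb).symm := by
    refine path_ext' (congrArg vtx harga) (congrArg vtx hargb) _ _ ?_
    rw [plen_genHomZ, plen_toPath']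
  have h2 : lenφ Φ ((ZMod.val a : ℕ) : ℤ)
      = plen (Φ.map (X := vtx a) (Y := vtx b) (Quiver.Hom.toPath ⟨he⟩)) := by
    unfold lenφ
    erw [h1, Functor.map_comp, Functor.map_comp, eqToHom_map, eqToHom_map]
    exact plen_conj _ _ _
  have hplen : plen ((toFun (FphiRep Φ hΦ)).map (X := vtx a) (Y := vtx b)
        (Quiver.Hom.toPath ⟨he⟩))
      = plen (Φ.map (X := vtx a) (Y := vtx b) (Quiver.Hom.toPath ⟨he⟩)) := by
    unfold toFun
    erw [Paths.lift_toPath, plen_prefF]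
    show (Fphi Φ (((ZMod.val a : ℕ) : ℤ) + 1) - Fphi Φ ((ZMod.val a : ℕ) : ℤ)).toNat = _
    rw [Fphi_succ Φ hΦ, ← h2]
    simp
  exact path_ext' (congr_fun h_obj (vtx a)) (congr_fun h_obj (vtx b)) _ _ hplen
end CycAux

namespace CycAux

lemma toFun_comp {p q r : ℕ} (G : CycRep p q) (F : CycRep q r) :
    toFun (F.comp G) = toFun G ⋙ toFun F := by
  have h_obj : (toFun (F.comp G)).obj = (toFun G ⋙ toFun F).obj := by
    funext i
    obtain ⟨iv, rfl⟩ : ∃ j : CircVert p, vtx j = i := ⟨i, rfl⟩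
    show vtx (objF (F.comp G) iv) = (toFun F).obj (vtx (objF G iv))
    exact (toFun_obj F (G.val (ZMod.val iv : ℤ))).symm
  apply Paths.ext_functor h_obj
  intro a b e
  obtain ⟨he⟩ := e
  have hinner : (toFun G).map (X := vtx a) (Y := vtx b) (Quiver.Hom.toPath ⟨he⟩)
      = (prefF G).map ⟨he⟩ := Paths.lift_toPath _ _
  have map2 := map_plen_aux F (a := objF G a) ((prefF G).map ⟨he⟩)
  have hlen_inner : ((prefF G).map (X := a) (Y := b) ⟨he⟩).length = lenF G a :=
    plen_prefF G ⟨he⟩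
  have hw : (((ZMod.val (objF G a) : ℕ) : ℤ) : ZMod (q + 1))
      = ((G.val (ZMod.val a : ℤ) : ℤ) : ZMod (q + 1)) := val_intCast (objF G a)
  have hsub := cycSubCongr F (x := ((ZMod.val (objF G a) : ℕ) : ℤ))
    (x' := G.val (ZMod.val a : ℤ))
    (y := ((ZMod.val (objF G a) : ℕ) : ℤ) + ((lenF G a : ℕ) : ℤ))
    (y' := G.val ((ZMod.val a : ℤ) + 1)) hw (by rw [lenF_coe]; ring)
  have hplen : plen ((toFun (F.comp G)).map (X := vtx a) (Y := vtx b)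
        (Quiver.Hom.toPath ⟨he⟩))
      = plen ((toFun G ⋙ toFun F).map (X := vtx a) (Y := vtx b)
        (Quiver.Hom.toPath ⟨he⟩)) := by
    have hL : plen ((toFun (F.comp G)).map (X := vtx a) (Y := vtx b)
        (Quiver.Hom.toPath ⟨he⟩)) = lenF (F.comp G) a := by
      unfold toFun
      erw [Paths.lift_toPath, plen_prefF]
    have hR : (toFun G ⋙ toFun F).map (X := vtx a) (Y := vtx b)
          (Quiver.Hom.toPath ⟨he⟩)
        = (toFun F).map (X := vtx (objF G a)) (Y := vtx (objF G b))
          ((prefF G).map ⟨he⟩) := by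
      show (toFun F).map ((toFun G).map (Quiver.Hom.toPath ⟨he⟩)) = _
      rw [hinner]
      rfl
    rw [hL, hR]
    have hcomp_coe : (lenF (F.comp G) a : ℤ)
        = F.val (G.val ((ZMod.val a : ℤ) + 1)) - F.val (G.val (ZMod.val a : ℤ)) :=
      lenF_coe (F.comp G) a
    erw [hlen_inner] at map2
    have map2' : (plen ((toFun F).map (X := vtx (objF G a)) (Y := vtx (objF G b))
        ((prefF G).map ⟨he⟩)) : ℤ) = _ := map2
    exact_mod_cast (hcomp_coe.trans (hsub.symm.trans map2'.symm))
  exact path_ext' (congr_fun h_obj (vtx a)) (congr_fun h_obj (vtx b)) _ _ hplen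

noncomputable def cycEquiv (m n : ℕ) : Quotient (cycSetoid m n) ≃
    {F : Paths (CircVert m) ⥤ Paths (CircVert n) // IsCycFunctor F} :=
  Equiv.ofBijective
    (Quotient.lift (fun F : CycRep m n =>
        (⟨toFun F, toFun_isCyc F⟩ :
          {F : Paths (CircVert m) ⥤ Paths (CircVert n) // IsCycFunctor F}))
      (fun F G h => Subtype.ext (toFun_welldef F G h)))
    ⟨by
      intro x y
      induction x using Quotient.ind
      induction y using Quotient.ind
      intro h
      exact Quotient.sound (toFun_inj _ _ (congrArg Subtype.val h)),
     by
      rintro ⟨Φ, hΦ⟩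
      exact ⟨Quotient.mk _ (FphiRep Φ hΦ), Subtype.ext (toFun_Fphi Φ hΦ)⟩⟩

end CycAux

/-- For `m, n ≥ 0`, the set of `Λ`-functors `𝒬^m → 𝒬^n` is in bijection with
the set of nondecreasing functions `F : ℤ → ℤ` satisfying `F(x + m + 1) = F(x) + (n + 1)`, taken
modulo the equivalence relation `F ∼ F + (n + 1)`.  The bijection sends the class of `F` to the
`Λ`-functor mapping the vertex `i mod (m+1)` to `F(i) mod (n+1)` and mapping the generating arrow
`i → i+1` to the unique path of length `F(i+1) − F(i)`; and these bijections are compatible with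
composition.  (This identifies `Fun_Λ(𝒬^m, 𝒬^n)` with `Hom_Λ(⟨m⟩, ⟨n⟩)` in Connes' cyclic
category, so that `⟨n⟩ ↦ 𝒬^n` is a fully faithful embedding of the cyclic category into
`Λ`-categories.) -/
theorem cyclicCategory_lambdaFunctors :
    ∃ e : ∀ m n : ℕ, Quotient (cycSetoid m n) ≃
        {F : Paths (CircVert m) ⥤ Paths (CircVert n) // IsCycFunctor F},
      (∀ (m n : ℕ) (F : CycRep m n) (x : ℤ),
        (e m n (Quotient.mk (cycSetoid m n) F)).val.obj (vtx ((x : ZMod (m + 1))))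
          = vtx ((F.val x : ZMod (n + 1)))) ∧
      (∀ (m n : ℕ) (F : CycRep m n) (x : ℤ),
        plen ((e m n (Quotient.mk (cycSetoid m n) F)).val.map (genHomZ m x))
          = (F.val (x + 1) - F.val x).toNat) ∧
      (∀ (p m n : ℕ) (G : CycRep p m) (F : CycRep m n),
        (e p n (Quotient.mk (cycSetoid p n) (F.comp G))).val
          = (e p m (Quotient.mk (cycSetoid p m) G)).val
              ⋙ (e m n (Quotient.mk (cycSetoid m n) F)).val) := by
  exact ⟨CycAux.cycEquiv, fun _ _ F x => CycAux.toFun_obj F x,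
    fun _ _ F x => CycAux.toFun_plen F x, fun _ _ _ G F => CycAux.toFun_comp G F⟩
end

section
/- Fix n ≥ 0. Let 𝒬^0 denote the one-object category with endomorphism monoid (ℕ, +), with Λ-structure given by the element 1 ∈ ℕ, and let (𝒬^n)^∨ denote the category whose objects are Λ-functors 𝒬^n → 𝒬^0 and whose morphisms are natural transformations. Then the functor (𝒬^n)^op → (𝒬^n)^∨ which sends an object j ∈ ℤ/(n+1) to the Λ-functor H_j : 𝒬^n → 𝒬^0 defined on the generating arrow i → i+1 by H_j(i → i+1) = 1 ∈ ℕ if i+1 = j and H_j(i → i+1) = 0 otherwise, and which sends a morphism f : j → j' of 𝒬^n to the natural transformation H_j ⇒ H_{j'} induced by precomposition with f under the canonical identifications Hom_{𝒬^n}(j, i) ≅ ℕ (sending t + φ_{ji} to t), is an equivalence of categories. Moreover, this equivalence is a Λ-equivalence: it carries the Λ-structure of (𝒬^n)^op (given by the full-cycle endomorphisms w_j) to the Λ-structure of (𝒬^n)^∨ (given by adding 1 ∈ ℕ to every component of a natural transformation). -/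
open CategoryTheory

/-- The dual `Λ`-category `(𝒬ⁿ)^∨`: the category of `Λ`-functors `𝒬ⁿ → 𝒬⁰` with natural
transformations as morphisms. -/
abbrev CycDual (n : ℕ) :=
  CategoryTheory.ObjectProperty.FullSubcategory
    (fun F : Paths (CircVert n) ⥤ Paths (CircVert 0) => IsCycFunctor F)


-- basic lemmas
section Basics
open Quiver

universe u
variable {m : ℕ}

lemma plen_eq {V : Type u} [Quiver V] {a b : Paths V} (p : a ⟶ b) :
    plen p = Quiver.Path.length p := rfl

lemma length_cast {V : Type u} [Quiver V] {a a' b b' : V} (ha : a = a') (hb : b = b')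
    (p : Quiver.Path a b) : (p.cast ha hb).length = p.length := by
  subst ha; subst hb; rw [Quiver.Path.cast_rfl_rfl]

lemma plen_arc (n : ℕ) (i : CircVert n) (k : ℕ) : (arc n i k).length = k := by
  induction k with
  | zero => simp [arc, length_cast]
  | succ k ih => simp [arc, ih]

lemma plen_cycleW (n : ℕ) (i : CircVert n) : plen (cycleW n i) = n + 1 := by
  simp [cycleW, plen, length_cast, plen_arc]

lemma plen_shortPath (n : ℕ) (i j : CircVert n) : plen (shortPath n i j) = (j - i).val := by
  simp [shortPath, plen, length_cast, plen_arc]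

-- paths in the circular quiver are determined by source and length
lemma path_det {i j j' : CircVert m} (p : Quiver.Path i j) (q : Quiver.Path i j')
    (h : p.length = q.length) : j = j' ∧ HEq p q := by
  induction p generalizing j' q with
  | nil =>
    cases q with
    | nil => exact ⟨rfl, HEq.rfl⟩
    | cons q' e' => simp at h
  | cons p' e ih =>
    cases q with
    | nil => simp at h
    | @cons c' _ q' e' =>
      simp only [Quiver.Path.length_cons, Nat.add_right_cancel_iff] at h
      obtain ⟨hc, hp⟩ := ih q' h
      · rename_i c _
        subst hc
        have he := e.down
        have he' := e'.down
        subst he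
        subst he'
        cases hp
        obtain rfl : e = e' := Subsingleton.elim (α := PLift (c + 1 = c + 1)) e e'
        exact ⟨rfl, HEq.rfl⟩

lemma homext {x y : Paths (CircVert m)} (f g : x ⟶ y) (h : plen f = plen g) : f = g :=
  eq_of_heq (path_det f g h).2

-- endpoint congruence
lemma plen_congr {x y : CircVert m} (p : Quiver.Path x y) :
    ((p.length : ℕ) : ZMod (m + 1)) = y - x := by
  induction p with
  | nil => simp
  | @cons c d p' e ih =>
    have he := e.down
    subst he
    simp only [Quiver.Path.length_cons]
    push_cast
    rw [ih]; ring

end Basics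
section Stage2

instance : Subsingleton (CircVert 0) :=
  ⟨fun a b => Subsingleton.elim (α := Fin 1) a b⟩

instance : Subsingleton (Paths (CircVert 0)) :=
  ⟨fun a b => Subsingleton.elim (α := Fin 1) a b⟩

/-- A morphism of given length in `𝒬⁰`. -/
def mk0 (x y : Paths (CircVert 0)) (k : ℕ) : x ⟶ y :=
  Quiver.Path.cast rfl (Subsingleton.elim _ _) (arc 0 x k)

lemma plen_mk0 (x y : Paths (CircVert 0)) (k : ℕ) : plen (mk0 x y k) = k := by
  exact (length_cast (V := CircVert 0) _ _ (arc 0 x k)).trans (plen_arc 0 x k)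

lemma plen_comp {V : Type*} [Quiver V] {x y z : Paths V} (f : x ⟶ y) (g : y ⟶ z) :
    plen (f ≫ g) = plen f + plen g :=
  Quiver.Path.length_comp f g

lemma mk0_comp (x y z : Paths (CircVert 0)) (a b : ℕ) :
    mk0 x y a ≫ mk0 y z b = mk0 x z (a + b) := by
  apply homext
  rw [plen_mk0, plen_comp, plen_mk0, plen_mk0]

lemma mk0_id (x : Paths (CircVert 0)) : mk0 x x 0 = 𝟙 x := by
  apply homext; rw [plen_mk0]; rfl

/-- A morphism of given length in `𝒬ⁿ`. -/
def mkHom (n : ℕ) (x y : CircVert n) (ℓ : ℕ) (h : (ℓ : ZMod (n + 1)) = y - x) :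
    vtx x ⟶ vtx y :=
  Quiver.Path.cast rfl (by rw [h]; ring) (arc n x ℓ)

lemma plen_mkHom (n : ℕ) (x y : CircVert n) (ℓ : ℕ) (h) :
    plen (mkHom n x y ℓ h) = ℓ := by
  simp [mkHom, plen, length_cast, plen_arc]

variable {m : ℕ}

/-- Count of passages through `j`. -/
def cnt (j : CircVert m) : ∀ {x y : CircVert m}, Quiver.Path x y → ℕ
  | _, _, Quiver.Path.nil => 0
  | _, y, Quiver.Path.cons p _ => cnt j p + (if y = j then 1 else 0)

lemma cnt_nil (j : CircVert m) (x : CircVert m) :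
    cnt j (Quiver.Path.nil (a := x)) = 0 := by simp [cnt]

lemma cnt_cons (j : CircVert m) {x c y : CircVert m} (p : Quiver.Path x c)
    (e : c ⟶ y) : cnt j (p.cons e) = cnt j p + (if y = j then 1 else 0) := by simp [cnt]

lemma val_succ (z : ZMod (m + 1)) :
    (z + 1).val = if z + 1 = 0 then 0 else z.val + 1 := by
  have h0 : z + 1 = ((z.val + 1 : ℕ) : ZMod (m + 1)) := by
    push_cast [ZMod.natCast_zmod_val]
    ring
  have h1 : (z + 1).val = (z.val + 1) % (m + 1) := by
    rw [h0, ZMod.val_natCast]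
  have hlt := ZMod.val_lt z
  rcases Nat.lt_or_ge z.val m with h | h
  · have hne : z + 1 ≠ 0 := by
      intro hc
      rw [hc, ZMod.val_zero] at h1
      rw [Nat.mod_eq_of_lt (by omega)] at h1
      omega
    rw [if_neg hne, h1, Nat.mod_eq_of_lt (by omega)]
  · have hm : z.val = m := by omega
    have hz : z + 1 = 0 := by
      have : (z + 1).val = 0 := by rw [h1, hm, Nat.mod_self]
      exact (ZMod.val_eq_zero _).mp this
    rw [if_pos hz, hz, ZMod.val_zero]

/-- The master identity for `cnt`. -/
lemma cnt_identity (j : CircVert m) {x y : CircVert m} (p : Quiver.Path x y) :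
    (x - j).val + p.length = (m + 1) * cnt j p + (y - j).val := by
  induction p with
  | nil => simp [cnt]
  | @cons c d p' e ih =>
    have he := e.down
    subst he
    simp only [Quiver.Path.length_cons, cnt]
    have hv : (c + 1 - j).val = if c + 1 = j then 0 else (c - j).val + 1 := by
      have : c + 1 - j = (c - j) + 1 := by ring
      rw [this, val_succ]
      have : c - j + 1 = 0 ↔ c + 1 = j := by
        constructor
        · intro h; linear_combination h
        · intro h; rw [← h]; ring
      by_cases hc : c + 1 = j
      · rw [if_pos (this.mpr hc), if_pos hc]
      · rw [if_neg (fun hh => hc (this.mp hh)), if_neg hc]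
    by_cases hc : c + 1 = j
    · rw [if_pos hc] at hv ⊢
      rw [hv]
      have hcv : (c - j).val = m := by
        have h2 : c - j = -1 := by rw [← hc]; ring
        rw [h2, ZMod.val_neg_one]
      rw [hcv] at ih
      rw [Nat.mul_add, Nat.mul_one]
      omega
    · rw [if_neg hc] at hv ⊢
      rw [hv, Nat.mul_add]
      omega

lemma cnt_comp (j : CircVert m) {x y z : CircVert m} (p : Quiver.Path x y)
    (q : Quiver.Path y z) : cnt j (p.comp q) = cnt j p + cnt j q := by
  have h1 := cnt_identity j p
  have h2 := cnt_identity j q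
  have h3 := cnt_identity j (p.comp q)
  rw [Quiver.Path.length_comp] at h3
  have key : (m + 1) * cnt j (p.comp q) = (m + 1) * (cnt j p + cnt j q) := by
    rw [Nat.mul_add]; omega
  exact Nat.eq_of_mul_eq_mul_left (Nat.succ_pos m) key

lemma cnt_cast (j : CircVert m) {x x' y y' : CircVert m} (hx : x = x') (hy : y = y')
    (p : Quiver.Path x y) : cnt j (p.cast hx hy) = cnt j p := by
  subst hx; subst hy; rw [Quiver.Path.cast_rfl_rfl]

end Stage2
section Stage3

/-- The functor `H_j : 𝒬ⁿ ⥤ 𝒬⁰`. -/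
def Hfun (n : ℕ) (j : CircVert n) : Paths (CircVert n) ⥤ Paths (CircVert 0) where
  obj _ := vtx (0 : CircVert 0)
  map {x y} p := mk0 _ _ (cnt j p)
  map_id x := by
    apply homext
    show plen (mk0 _ _ (cnt j (𝟙 x))) = plen (𝟙 (vtx (0 : CircVert 0)))
    rw [plen_mk0]
    show cnt j Quiver.Path.nil = Quiver.Path.length Quiver.Path.nil
    exact cnt_nil j x
  map_comp {x y z} f g := by
    apply homext
    show plen (mk0 _ _ (cnt j (f ≫ g)))
      = plen (mk0 _ _ (cnt j f) ≫ mk0 _ _ (cnt j g))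
    rw [plen_mk0, plen_comp, plen_mk0, plen_mk0]
    exact cnt_comp j f g

lemma cnt_cycleW (n : ℕ) (j i : CircVert n) : cnt j (cycleW n i) = 1 := by
  have h := cnt_identity j (cycleW n i)
  have hl : Quiver.Path.length (cycleW n i) = n + 1 := plen_cycleW n i
  rw [hl] at h
  have key : (n + 1) * cnt j (cycleW n i) = (n + 1) * 1 := by omega
  exact Nat.eq_of_mul_eq_mul_left (Nat.succ_pos n) key

lemma plen_cycleW0 (x : Paths (CircVert 0)) : plen (cycleW 0 x) = 1 := plen_cycleW 0 x

lemma Hfun_cyc (n : ℕ) (j : CircVert n) : IsCycFunctor (Hfun n j) := by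
  intro i
  apply homext
  show plen (mk0 _ _ (cnt j (cycleW n i))) = _
  rw [plen_mk0, cnt_cycleW, plen_cycleW0]

/-- The component of the dual natural transformation. -/
def tcomp (n : ℕ) (j j' i : CircVert n) (ℓ : ℕ) : ℕ :=
  (ℓ + (i - j).val - (i - j').val) / (n + 1)

lemma tcomp_identity (n : ℕ) (j j' i : CircVert n) (ℓ : ℕ)
    (hℓ : ((ℓ : ℕ) : ZMod (n + 1)) = j - j') :
    (n + 1) * tcomp n j j' i ℓ + (i - j').val = ℓ + (i - j).val := by
  set a := (i - j).val with ha
  set b := (i - j').val with hb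
  have hcast : ((a + ℓ : ℕ) : ZMod (n + 1)) = ((b : ℕ) : ZMod (n + 1)) := by
    push_cast [ha, hb, ZMod.natCast_zmod_val, hℓ]
    ring
  have hmod : (a + ℓ) % (n + 1) = b := by
    have := (ZMod.natCast_eq_natCast_iff _ _ _).mp hcast
    have hblt : b < n + 1 := ZMod.val_lt _
    unfold Nat.ModEq at this
    rw [Nat.mod_eq_of_lt hblt] at this
    exact this
  have hble : b ≤ a + ℓ := hmod ▸ Nat.mod_le _ _
  have hdvd : (n + 1) ∣ (a + ℓ - b) := by
    conv_lhs => skip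
    rw [← hmod]
    exact Nat.dvd_sub_mod _
  obtain ⟨q, hq⟩ := hdvd
  have hq' : ℓ + a - b = (n + 1) * q := by rw [Nat.add_comm ℓ a]; exact hq
  have htc : tcomp n j j' i ℓ = q := by
    show (ℓ + a - b) / (n + 1) = q
    rw [hq', Nat.mul_div_cancel_left q (Nat.succ_pos n)]
  rw [htc]
  have := (Nat.sub_eq_iff_eq_add hble).mp hq
  omega

lemma tcomp_unique (n : ℕ) (j j' i : CircVert n) (ℓ : ℕ)
    (hℓ : ((ℓ : ℕ) : ZMod (n + 1)) = j - j') (t : ℕ)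
    (ht : (n + 1) * t + (i - j').val = ℓ + (i - j).val) : t = tcomp n j j' i ℓ := by
  have h := tcomp_identity n j j' i ℓ hℓ
  have key : (n + 1) * t = (n + 1) * tcomp n j j' i ℓ := by omega
  exact Nat.eq_of_mul_eq_mul_left (Nat.succ_pos n) key

lemma tcomp_nat (n : ℕ) (j j' : CircVert n) (ℓ : ℕ)
    (hℓ : ((ℓ : ℕ) : ZMod (n + 1)) = j - j') {x y : CircVert n} (p : Quiver.Path x y) :
    cnt j p + tcomp n j j' y ℓ = tcomp n j j' x ℓ + cnt j' p := by
  have E1 := cnt_identity j p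
  have E2 := cnt_identity j' p
  have E3 := tcomp_identity n j j' x ℓ hℓ
  have E4 := tcomp_identity n j j' y ℓ hℓ
  have key : (n + 1) * (cnt j p + tcomp n j j' y ℓ)
      = (n + 1) * (tcomp n j j' x ℓ + cnt j' p) := by
    rw [Nat.mul_add, Nat.mul_add]; linarith
  exact Nat.eq_of_mul_eq_mul_left (Nat.succ_pos n) key

/-- Component of the dual natural transformation. -/
def dualApp (n : ℕ) (j j' : CircVert n) (ℓ : ℕ) (i : Paths (CircVert n)) :
    (Hfun n j).obj i ⟶ (Hfun n j').obj i :=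
  mk0 _ _ (tcomp n j j' i ℓ)

lemma plen_dualApp (n : ℕ) (j j' : CircVert n) (ℓ : ℕ) (i : Paths (CircVert n)) :
    plen (dualApp n j j' ℓ i) = tcomp n j j' i ℓ := plen_mk0 _ _ _

lemma dualApp_nat (n : ℕ) (j j' : CircVert n) (ℓ : ℕ)
    (hℓ : ((ℓ : ℕ) : ZMod (n + 1)) = j - j') {x y : Paths (CircVert n)} (p : x ⟶ y) :
    (Hfun n j).map p ≫ dualApp n j j' ℓ y = dualApp n j j' ℓ x ≫ (Hfun n j').map p := by
  apply homext
  rw [plen_comp, plen_comp]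
  have h1 : plen ((Hfun n j).map p) = cnt j p := plen_mk0 _ _ _
  have h2 : plen ((Hfun n j').map p) = cnt j' p := plen_mk0 _ _ _
  rw [h1, h2, plen_dualApp, plen_dualApp]
  exact tcomp_nat n j j' ℓ hℓ p

/-- The duality functor `G : (𝒬ⁿ)ᵒᵖ ⥤ (𝒬ⁿ)^∨`. -/
def Gfun (n : ℕ) : (Paths (CircVert n))ᵒᵖ ⥤ CycDual n where
  obj X := ⟨Hfun n X.unop, Hfun_cyc n X.unop⟩
  map {X Y} f :=
    ObjectProperty.homMk
    { app := dualApp n X.unop Y.unop (plen f.unop)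
      naturality := fun {x y} p => dualApp_nat n X.unop Y.unop _ (plen_congr f.unop) p }
  map_id X := by
    apply ObjectProperty.hom_ext
    apply NatTrans.ext
    funext i
    show dualApp n X.unop X.unop (plen ((𝟙 X).unop)) i = 𝟙 _
    apply homext
    erw [plen_dualApp]
    have h0 : plen ((𝟙 X).unop) = 0 := rfl
    rw [h0]
    have : tcomp n X.unop X.unop i 0 = 0 := by simp [tcomp]
    rw [this]
    rfl
  map_comp {X Y Z} f g := by
    apply ObjectProperty.hom_ext
    apply NatTrans.ext
    funext i
    show dualApp n X.unop Z.unop (plen ((f ≫ g).unop)) i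
      = dualApp n X.unop Y.unop (plen f.unop) i ≫ dualApp n Y.unop Z.unop (plen g.unop) i
    apply homext
    rw [plen_comp]; erw [plen_dualApp, plen_dualApp, plen_dualApp]
    have hlen : plen ((f ≫ g).unop) = plen g.unop + plen f.unop := by
      show plen (g.unop ≫ f.unop) = _
      rw [plen_comp]
    rw [hlen]
    symm
    apply tcomp_unique n X.unop Z.unop i _ _ _
    · have E1 := tcomp_identity n X.unop Y.unop i (plen f.unop) (plen_congr f.unop)
      have E2 := tcomp_identity n Y.unop Z.unop i (plen g.unop) (plen_congr g.unop)
      rw [Nat.mul_add]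
      linarith
    · rw [Nat.cast_add, plen_eq g.unop, plen_eq f.unop, plen_congr g.unop, plen_congr f.unop]
      exact (add_comm _ _).trans (sub_add_sub_cancel _ _ _)

end Stage3
section Stage4

lemma Gfun_obj_map (n : ℕ) (X : (Paths (CircVert n))ᵒᵖ) {x y : Paths (CircVert n)} (p : x ⟶ y) :
    ((Gfun n).obj X).obj.map p = mk0 _ _ (cnt X.unop p) := rfl

lemma Gfun_map_app (n : ℕ) {X Y : (Paths (CircVert n))ᵒᵖ} (f : X ⟶ Y) (i : Paths (CircVert n)) :
    ((Gfun n).map f).hom.app i = dualApp n X.unop Y.unop (plen f.unop) i := rfl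

lemma val_sub_succ {m : ℕ} (c j : ZMod (m + 1)) :
    (c + 1 - j).val = if c + 1 = j then 0 else (c - j).val + 1 := by
  have h : c + 1 - j = (c - j) + 1 := by ring
  rw [h, val_succ]
  have hiff : c - j + 1 = 0 ↔ c + 1 = j := by
    constructor
    · intro h; linear_combination h
    · intro h; rw [← h]; ring
  by_cases hc : c + 1 = j
  · rw [if_pos (hiff.mpr hc), if_pos hc]
  · rw [if_neg (fun hh => hc (hiff.mp hh)), if_neg hc]

lemma val_self_sub {m : ℕ} (j : ZMod (m + 1)) : (j - j).val = 0 := by simp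

lemma val_pred {m : ℕ} {c j : ZMod (m + 1)} (h : c + 1 = j) : (c - j).val = m := by
  have : c - j = -1 := by rw [← h]; ring
  rw [this, ZMod.val_neg_one]

lemma cnt_toPath {m : ℕ} (j : CircVert m) {a b : CircVert m} (e : a ⟶ b) :
    cnt j (Quiver.Hom.toPath e) = if a + 1 = j then 1 else 0 := by
  obtain ⟨h⟩ := e
  subst h
  rw [Quiver.Hom.toPath, cnt_cons, cnt_nil, Nat.zero_add]

lemma cnt_genHom {m : ℕ} (j i : CircVert m) :
    cnt j (genHom m i) = if i + 1 = j then 1 else 0 := cnt_toPath j _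

lemma Gfun_faithful_aux (n : ℕ) (j j' : CircVert n)
    (f g : Opposite.op (vtx j) ⟶ Opposite.op (vtx j'))
    (h : (Gfun n).map f = (Gfun n).map g) : f = g := by
  have happ := congrArg (fun α => plen (NatTrans.app α.hom (vtx j))) h
  simp only [Gfun_map_app, plen_dualApp] at happ
  have happ2 : tcomp n j j' j (plen f.unop) = tcomp n j j' j (plen g.unop) := by
    erw [plen_dualApp, plen_dualApp] at happ; exact happ
  have e1 := tcomp_identity n j j' j (plen f.unop) (plen_congr f.unop)
  have e2 := tcomp_identity n j j' j (plen g.unop) (plen_congr g.unop)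
  rw [val_self_sub] at e1 e2
  rw [happ2] at e1
  have hlen : plen f.unop = plen g.unop := by omega
  exact Quiver.Hom.unop_inj (homext _ _ hlen)

instance (n : ℕ) : (Gfun n).Faithful where
  map_injective := by
    intro X Y f g h
    exact Gfun_faithful_aux n X.unop Y.unop f g h

lemma Gfun_full_aux (n : ℕ) (j j' : CircVert n)
    (α : (Gfun n).obj (Opposite.op (vtx j)) ⟶ (Gfun n).obj (Opposite.op (vtx j'))) :
    ∃ f : Opposite.op (vtx j) ⟶ Opposite.op (vtx j'), (Gfun n).map f = α := by
  set s : CircVert n → ℕ := fun i => plen (α.hom.app (vtx i)) with hs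
  have hstep : ∀ i : CircVert n,
      (if i + 1 = j then 1 else 0) + s (i + 1) = s i + (if i + 1 = j' then 1 else 0) := by
    intro i
    have hnat := α.hom.naturality (genHom n i)
    have hplen := congrArg plen hnat
    rw [plen_comp, plen_comp, Gfun_obj_map, Gfun_obj_map, plen_mk0, plen_mk0,
      cnt_genHom, cnt_genHom] at hplen
    exact hplen
  set ℓ : ℕ := (n + 1) * s j + (j - j').val with hℓ
  have hcast : ((ℓ : ℕ) : ZMod (n + 1)) = j - j' := by
    rw [hℓ]
    push_cast [ZMod.natCast_zmod_val]
    simp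
  obtain ⟨f₀, hf₀⟩ : ∃ f₀ : vtx j' ⟶ vtx j, plen f₀ = ℓ :=
    ⟨mkHom n j' j ℓ (by rw [hcast]), plen_mkHom n j' j ℓ _⟩
  refine ⟨f₀.op, ?_⟩
  apply ObjectProperty.hom_ext
  apply NatTrans.ext
  funext i
  obtain ⟨iv, rfl⟩ : ∃ iv : CircVert n, vtx iv = i := ⟨i, rfl⟩
  apply homext
  rw [Gfun_map_app]; erw [plen_dualApp]
  have hunop : (Quiver.Hom.op f₀).unop = f₀ := rfl
  rw [hunop, hf₀]
  show tcomp n j j' iv ℓ = s iv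
  have main : ∀ k : ℕ,
      (n + 1) * s (j + (k : ZMod (n + 1))) + ((j + (k : ZMod (n + 1))) - j').val
        = ℓ + ((j + (k : ZMod (n + 1))) - j).val := by
    intro k
    induction k with
    | zero =>
      simp only [Nat.cast_zero, add_zero]
      rw [val_self_sub, hℓ]
      omega
    | succ k ih =>
      have hc1 : j + ((k + 1 : ℕ) : ZMod (n + 1)) = (j + (k : ZMod (n + 1))) + 1 := by
        push_cast; ring
      rw [hc1]
      set c : CircVert n := j + (k : ZMod (n + 1)) with hc
      have hstepc := hstep c
      rw [val_sub_succ c j', val_sub_succ c j]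
      by_cases h1 : c + 1 = j <;> by_cases h2 : c + 1 = j'
      · rw [if_pos h1, if_pos h2] at hstepc ⊢
        have e1 := val_pred h1
        have e2 := val_pred h2
        have hsc : s (c + 1) = s c := by omega
        rw [hsc]
        omega
      · rw [if_pos h1, if_neg h2] at hstepc ⊢
        have e1 := val_pred h1
        have hsc : s c = s (c + 1) + 1 := by omega
        rw [hsc, Nat.mul_add, Nat.mul_one] at ih
        omega
      · rw [if_neg h1, if_pos h2] at hstepc ⊢
        have e2 := val_pred h2
        have hsc : s (c + 1) = s c + 1 := by omega
        rw [hsc, Nat.mul_add, Nat.mul_one]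
        omega
      · rw [if_neg h1, if_neg h2] at hstepc ⊢
        have hsc : s (c + 1) = s c := by omega
        rw [hsc]
        omega
  have hi : j + (((iv - j).val : ℕ) : ZMod (n + 1)) = iv := by
    rw [ZMod.natCast_zmod_val]; ring
  have hmain := main (iv - j).val
  rw [hi] at hmain
  exact (tcomp_unique n j j' iv ℓ hcast (s iv) hmain).symm

instance (n : ℕ) : (Gfun n).Full where
  map_surjective := by
    intro X Y α
    obtain ⟨f, hf⟩ := Gfun_full_aux n X.unop Y.unop α
    exact ⟨f, hf⟩

end Stage4
section Stage5

lemma plen_eqToHom {x y : Paths (CircVert 0)} (h : x = y) : plen (eqToHom h) = 0 := by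
  subst h; rfl

lemma plen_map_cast (n : ℕ) (Fo : Paths (CircVert n) ⥤ Paths (CircVert 0))
    {x x' y y' : CircVert n} (hx : x = x') (hy : y = y') (p : Quiver.Path x y) :
    plen (Fo.map (p.cast hx hy)) = plen (Fo.map p) := by
  subst hx; subst hy; rw [Quiver.Path.cast_rfl_rfl]

lemma cons_eq_comp_toPath {n : ℕ} {x y z : CircVert n} (p : Quiver.Path x y) (e : y ⟶ z) :
    p.cons e = CategoryStruct.comp (obj := Paths (CircVert n)) p e.toPath := rfl

instance (n : ℕ) : (Gfun n).EssSurj where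
  mem_essImage := by
    intro F
    obtain ⟨F₀, hF⟩ := F
    set b : CircVert n → ℕ := fun x => plen (F₀.map (genHom n x)) with hb
    have harrow : ∀ {x y : CircVert n} (e : x ⟶ y), plen (F₀.map e.toPath) = b x := by
      intro x y e
      obtain ⟨h⟩ := e
      subst h
      rfl
    have hplen_id : ∀ x : Paths (CircVert n), plen (F₀.map (𝟙 x)) = 0 := by
      intro x
      rw [F₀.map_id]
      rfl
    have hsum : ∀ (x : CircVert n) (k : ℕ),
        plen (F₀.map (arc n x k)) = ∑ t ∈ Finset.range k, b (x + (t : ZMod (n + 1))) := by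
      intro x k
      induction k with
      | zero =>
        rw [show arc n x 0 = Quiver.Path.cast rfl (by simp) Quiver.Path.nil from rfl]
        rw [plen_map_cast]
        simp only [Finset.range_zero, Finset.sum_empty]
        exact hplen_id (vtx x)
      | succ k ih =>
        rw [show arc n x (k + 1) = (arc n x k).cons ⟨by push_cast; ring⟩ from rfl]
        rw [cons_eq_comp_toPath]; erw [F₀.map_comp]; rw [plen_comp, harrow, ih,
          Finset.sum_range_succ]
    have hone : ∑ t ∈ Finset.range (n + 1), b ((0 : CircVert n) + (t : ZMod (n + 1))) = 1 := by
      have h0 := congrArg plen (hF (0 : CircVert n))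
      rw [show cycleW n 0 = Quiver.Path.cast rfl (by simp) (arc n 0 (n + 1)) from rfl] at h0
      rw [plen_map_cast, hsum, plen_cycleW0] at h0
      exact h0
    -- find the unique vertex with b = 1
    have hex : ∃ t0 ∈ Finset.range (n + 1), b ((0 : CircVert n) + (t0 : ZMod (n + 1))) ≠ 0 := by
      by_contra hcon
      push_neg at hcon
      rw [Finset.sum_eq_zero (fun t ht => hcon t ht)] at hone
      exact Nat.zero_ne_one hone
    obtain ⟨t0, ht0mem, ht0⟩ := hex
    have hsplit := Finset.add_sum_erase (Finset.range (n + 1))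
      (fun t => b ((0 : CircVert n) + (t : ZMod (n + 1)))) ht0mem
    rw [hone] at hsplit
    have hsplit' : b ((0 : CircVert n) + (t0 : ZMod (n + 1)))
        + ∑ t ∈ (Finset.range (n + 1)).erase t0, b ((0 : CircVert n) + (t : ZMod (n + 1)))
        = 1 := hsplit
    have hb1 : b ((0 : CircVert n) + (t0 : ZMod (n + 1))) = 1 := by omega
    have hrest : ∑ t ∈ (Finset.range (n + 1)).erase t0,
        b ((0 : CircVert n) + (t : ZMod (n + 1))) = 0 := by omega
    have hzero : ∀ t ∈ (Finset.range (n + 1)).erase t0,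
        b ((0 : CircVert n) + (t : ZMod (n + 1))) = 0 :=
      Finset.sum_eq_zero_iff.mp hrest
    set j : CircVert n := (t0 : ZMod (n + 1)) + 1 with hj
    have hbval : ∀ x : CircVert n, b x = if x + 1 = j then 1 else 0 := by
      intro x
      have hxlt : x.val < n + 1 := ZMod.val_lt x
      have hxcast : ((x.val : ℕ) : ZMod (n + 1)) = x := ZMod.natCast_zmod_val x
      by_cases hc : x + 1 = j
      · rw [if_pos hc]
        have hxt : x = ((t0 : ℕ) : ZMod (n + 1)) := by
          have := hc
          rw [hj] at this
          exact add_right_cancel this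
        rw [show x = (0 : CircVert n) + (t0 : ZMod (n + 1)) by rw [hxt]; ring]
        exact hb1
      · rw [if_neg hc]
        have hne : x.val ≠ t0 := by
          intro hcon
          apply hc
          have hx2 : x = ((t0 : ℕ) : ZMod (n + 1)) := by rw [← hxcast, hcon]
          rw [hj, hx2]
        have hmem : x.val ∈ (Finset.range (n + 1)).erase t0 :=
          Finset.mem_erase.mpr ⟨hne, Finset.mem_range.mpr hxlt⟩
        have := hzero x.val hmem
        rw [show (0 : CircVert n) + ((x.val : ℕ) : ZMod (n + 1)) = x by rw [hxcast]; ring] at this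
        exact this
    -- F₀ equals H_j
    have hFH : F₀ = Hfun n j := by
      apply Paths.ext_functor (funext fun x => Subsingleton.elim _ _)
      intro a c e
      apply homext
      rw [plen_comp, plen_comp, plen_eqToHom, plen_eqToHom, harrow]
      have hH : plen ((Hfun n j).map (Quiver.Hom.toPath e)) = cnt j (Quiver.Hom.toPath e) :=
        plen_mk0 _ _ _
      rw [hH, cnt_toPath, hbval a]
      omega
    subst hFH
    exact ⟨Opposite.op (vtx j), ⟨eqToIso rfl⟩⟩

end Stage5

/-- The functor `(𝒬ⁿ)ᵒᵖ → (𝒬ⁿ)^∨` sending `j` to the `Λ`-functor `H_j`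
(defined on the generating arrow `i → i+1` by `1 ∈ ℕ` if `i + 1 = j` and `0` otherwise) and
sending `f : j' → j` to the natural transformation `H_j ⇒ H_{j'}` induced by precomposition with
`f` under the identifications `Hom(j, i) ≅ ℕ` (so that the component at `i` is the natural number
`t` with `t(n+1) + length φ_{j'i} = length f + length φ_{ji}`), is an equivalence of categories;
moreover it is a `Λ`-equivalence, carrying the full-cycle endomorphisms `w_j` of `(𝒬ⁿ)ᵒᵖ` to the
`Λ`-structure of `(𝒬ⁿ)^∨` (adding `1 ∈ ℕ`, i.e. one loop, to every component). -/
theorem cyclic_duality (n : ℕ) :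
    ∃ e : (Paths (CircVert n))ᵒᵖ ≌ CycDual n,
      -- on objects: `j ↦ H_j`
      (∀ (j i : CircVert n),
        plen ((e.functor.obj (Opposite.op (vtx j))).obj.map (genHom n i))
          = if i + 1 = j then 1 else 0) ∧
      -- on morphisms: precomposition under the identifications `Hom(j, i) ≅ ℕ`
      (∀ (j j' : CircVert n) (f : vtx j' ⟶ vtx j) (i : CircVert n),
        plen ((e.functor.map f.op).hom.app (vtx i)) * (n + 1) + plen (shortPath n j' i)
          = plen f + plen (shortPath n j i)) ∧
      -- the equivalence is a `Λ`-equivalence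
      (∀ (j i : CircVert n),
        (e.functor.map (cycleW n j).op).hom.app (vtx i)
          = cycleW 0 ((e.functor.obj (Opposite.op (vtx j))).obj.obj (vtx i))) := by
  have hequiv : (Gfun n).IsEquivalence := {}
  refine ⟨(Gfun n).asEquivalence, ?_, ?_, ?_⟩
  · intro j i
    show plen (((Gfun n).obj (Opposite.op (vtx j))).obj.map (genHom n i))
      = if i + 1 = j then 1 else 0
    rw [Gfun_obj_map, plen_mk0]
    exact (cnt_genHom j i : _)
  · intro j j' f i
    show plen (((Gfun n).map (Quiver.Hom.op f)).hom.app (vtx i)) * (n + 1) + plen (shortPath n j' i)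
      = plen f + plen (shortPath n j i)
    rw [Gfun_map_app]; erw [plen_dualApp]; rw [plen_shortPath, plen_shortPath]
    have hid := tcomp_identity n j j' i (plen f) (plen_congr f)
    have hgoal : tcomp n j j' i (plen f) * (n + 1) + (i - j').val
        = plen f + (i - j).val := by rw [Nat.mul_comm]; exact hid
    exact hgoal
  · intro j i
    show ((Gfun n).map (Quiver.Hom.op (cycleW n j))).hom.app (vtx i)
      = cycleW 0 (((Gfun n).obj (Opposite.op (vtx j))).obj.obj (vtx i))
    apply homext
    rw [Gfun_map_app]; erw [plen_dualApp]; rw [plen_cycleW0]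
    have hunop : plen ((Quiver.Hom.op (cycleW n j)).unop) = n + 1 := plen_cycleW n j
    rw [hunop]
    have hgoal : tcomp n j j i (n + 1) = 1 := by
      show (n + 1 + (i - j).val - (i - j).val) / (n + 1) = 1
      rw [Nat.add_sub_cancel, Nat.div_self (Nat.succ_pos n)]
    exact hgoal
end

section
/- Let C be a small category and let n, m ≥ 1. Let Φ be the map from NC_{n+m}(C) to NC_n(C) × NC_{m+1}(C) sending a cyclic (n+m)-chain (x_0, …, x_{n+m}; f_0, …, f_{n+m}) to the pair consisting of (i) the cyclic n-chain with objects x_0, …, x_n, morphisms f_0, …, f_{n−1}, and return morphism f_{n+m} ∘ f_{n+m−1} ∘ ⋯ ∘ f_n : x_n → x_0, and (ii) the cyclic (m+1)-chain with objects x_0, x_n, x_{n+1}, …, x_{n+m}, first morphism f_{n−1} ∘ ⋯ ∘ f_0 : x_0 → x_n, followed by f_n, …, f_{n+m−1}, and return morphism f_{n+m} : x_{n+m} → x_0. Then Φ is injective, and its image consists exactly of the pairs of a cyclic n-chain (y_0, …, y_n; g_0, …, g_n) and a cyclic (m+1)-chain (z_0, …, z_{m+1}; h_0, …, h_{m+1})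 such that y_0 = z_0, y_n = z_1, g_{n−1} ∘ ⋯ ∘ g_0 = h_0, and g_n = h_{m+1} ∘ h_m ∘ ⋯ ∘ h_1. (This is the 2-Segal map of the cyclic nerve of C associated with the subdivision of the (n+m+1)-gon with vertices 0, …, n+m along the diagonal {0, n}; its bijectivity onto the fiber product is the elementary case of the proposition that the cyclic nerve of a small category is a 2-Segal cyclic set.) -/
open CategoryTheory

universe v u

/-- A cyclic `n`-chain in a category `C`: objects `x_0, …, x_n`, morphisms
`f_k : x_k → x_{k+1}` for `0 ≤ k < n`, and a return morphism `f_n : x_n → x_0`.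
This is the `n`-th component of the cyclic nerve of `C`. -/
structure CyclicChain (C : Type u) [Category.{v} C] (n : ℕ) where
  obj : ∀ k : ℕ, k ≤ n → C
  map : ∀ k : ℕ, (h : k < n) → (obj k h.le ⟶ obj (k + 1) h)
  ret : obj n le_rfl ⟶ obj 0 (Nat.zero_le n)

namespace CyclicChain

variable {C : Type u} [Category.{v} C] {n : ℕ}

theorem obj_congr (c : CyclicChain C n) {a b : ℕ} (h : a = b) (ha : a ≤ n) (hb : b ≤ n) :
    c.obj a ha = c.obj b hb := by subst h; rfl

/-- The composite `f_{b-1} ∘ ⋯ ∘ f_a : x_a → x_b` of consecutive morphisms of a chain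
(the identity when `a = b`). -/
def comp (c : CyclicChain C n) : ∀ (a b : ℕ) (hab : a ≤ b) (hb : b ≤ n),
    (c.obj a (by omega) ⟶ c.obj b hb)
  | a, 0, hab, hb => eqToHom (c.obj_congr (Nat.le_zero.mp hab) _ _)
  | a, b + 1, hab, hb =>
    if h : a = b + 1 then eqToHom (c.obj_congr h _ _)
    else c.comp a b (by omega) (by omega) ≫ c.map b (by omega)

end CyclicChain

variable {C : Type u} [Category.{v} C]

/-- The `2`-Segal map of the cyclic nerve associated with the subdivision of the
`(n+m+1)`-gon with vertices `0, …, n+m` along the diagonal `{0, n}`: it sends a cyclic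
`(n+m)`-chain to (i) the cyclic `n`-chain `(x_0, …, x_n; f_0, …, f_{n-1},
f_{n+m} ∘ ⋯ ∘ f_n)` and (ii) the cyclic `(m+1)`-chain
`(x_0, x_n, …, x_{n+m}; f_{n-1} ∘ ⋯ ∘ f_0, f_n, …, f_{n+m-1}, f_{n+m})`. -/
def cyclicSegalMap (n m : ℕ) (c : CyclicChain C (n + m)) :
    CyclicChain C n × CyclicChain C (m + 1) :=
  (⟨fun k h => c.obj k (by omega),
    fun k h => c.map k (by omega),
    c.comp n (n + m) (by omega) le_rfl ≫ c.ret⟩,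
   ⟨fun k hk => match k, hk with
      | 0, _ => c.obj 0 (by omega)
      | j + 1, hk => c.obj (n + j) (by omega),
    fun k hk => match k, hk with
      | 0, _ => c.comp 0 n (by omega) (by omega)
      | j + 1, hk => c.map (n + j) (by omega),
    c.ret⟩)

namespace CyclicChain

variable {C : Type u} [Category.{v} C] {N N' : ℕ}

theorem comp_self (c : CyclicChain C N) (a : ℕ) (h1 : a ≤ a) (h : a ≤ N) :
    c.comp a a h1 h = 𝟙 _ := by
  cases a with
  | zero => simp [comp]
  | succ b => simp [comp]

theorem comp_succ (c : CyclicChain C N) (a b : ℕ) (hab : a ≤ b) (hb : b + 1 ≤ N)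
    (hab' : a ≤ b + 1) :
    c.comp a (b + 1) hab' hb = c.comp a b hab (by omega) ≫ c.map b (by omega) := by
  rw [comp, dif_neg (by omega)]

theorem comp_idx (c : CyclicChain C N) {a b a' b' : ℕ} (ha : a = a') (hb : b = b')
    (hab : a ≤ b) (hbN : b ≤ N) (hab' : a' ≤ b') (hbN' : b' ≤ N) :
    c.comp a b hab hbN =
      eqToHom (c.obj_congr ha (by omega) (by omega)) ≫ c.comp a' b' hab' hbN'
        ≫ eqToHom (c.obj_congr hb.symm hbN' hbN) := by
  subst ha; subst hb; simp

theorem map_idx (c : CyclicChain C N) {a a' : ℕ} (h : a = a') (ha : a < N) (ha' : a' < N) :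
    c.map a ha =
      eqToHom (c.obj_congr h (by omega) (by omega)) ≫ c.map a' ha'
        ≫ eqToHom (c.obj_congr (by omega) ha' ha) := by
  subst h; simp

theorem obj_eq_of_eq {c d : CyclicChain C N} (h : c = d) (k : ℕ) (hk : k ≤ N) :
    c.obj k hk = d.obj k hk := by subst h; rfl

theorem map_eq_of_eq {c d : CyclicChain C N} (h : c = d) (k : ℕ) (hk : k < N) :
    c.map k hk = eqToHom (obj_eq_of_eq h k hk.le) ≫ d.map k hk
      ≫ eqToHom (obj_eq_of_eq h (k + 1) hk).symm := by subst h; simp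

theorem ret_eq_of_eq {c d : CyclicChain C N} (h : c = d) :
    c.ret = eqToHom (obj_eq_of_eq h N le_rfl) ≫ d.ret
      ≫ eqToHom (obj_eq_of_eq h 0 (Nat.zero_le N)).symm := by subst h; simp

theorem ext' {c d : CyclicChain C N}
    (hobj : ∀ k (h : k ≤ N), c.obj k h = d.obj k h)
    (hmap : ∀ k (h : k < N), c.map k h =
      eqToHom (hobj k h.le) ≫ d.map k h ≫ eqToHom (hobj (k + 1) h).symm)
    (hret : c.ret = eqToHom (hobj N le_rfl) ≫ d.ret
      ≫ eqToHom (hobj 0 (Nat.zero_le N)).symm) : c = d := by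
  obtain ⟨co, cma, cr⟩ := c
  obtain ⟨do', dma, dr⟩ := d
  obtain rfl : co = do' := by funext k h; exact hobj k h
  simp only [eqToHom_refl, Category.comp_id, Category.id_comp] at hmap hret
  congr 1
  · funext k h; exact hmap k h

theorem comp_congr_shift (c : CyclicChain C N) (d : CyclicChain C N') (s : ℕ)
    (a b : ℕ) (hab : a ≤ b) (hb : b ≤ N') (hsb : s + b ≤ N)
    (hobj : ∀ k, a ≤ k → ∀ hk : k ≤ b, d.obj k (hk.trans hb) = c.obj (s + k) (by omega))
    (hmap : ∀ k (h1 : a ≤ k) (h2 : k < b),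
      d.map k (lt_of_lt_of_le h2 hb) =
        eqToHom (hobj k h1 h2.le) ≫ c.map (s + k) (by omega)
          ≫ eqToHom (hobj (k + 1) (by omega) h2).symm) :
    d.comp a b hab hb =
      eqToHom (hobj a le_rfl hab) ≫ c.comp (s + a) (s + b) (by omega) hsb
        ≫ eqToHom (hobj b hab le_rfl).symm := by
  induction b with
  | zero =>
      obtain rfl : a = 0 := Nat.le_zero.mp hab
      rw [comp_self, comp_self]
      simp
  | succ b ih =>
      by_cases hA : a = b + 1
      · subst hA
        rw [comp_self, comp_self]
        simp
      · have hab' : a ≤ b := by omega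
        rw [comp_succ d a b hab' hb hab,
          comp_idx c (rfl : s + a = s + a) (show s + (b + 1) = s + b + 1 by omega)
            (by omega) hsb (by omega) (by omega),
          comp_succ c (s + a) (s + b) (by omega) (by omega) (by omega),
          ih hab' (by omega) (by omega)
            (fun k h1 hk => hobj k h1 (by omega))
            (fun k h1 h2 => hmap k h1 (by omega)),
          hmap b hab' (by omega)]
        simp

end CyclicChain

theorem eqToHom_sandwich {X Y X' Y' X'' Y'' : C} (f : X ⟶ Y) (p : X' = X) (q : Y = Y')
    (r : X' = X'') (s : X'' = X) (t : Y = Y'') (u : Y'' = Y') :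
    eqToHom p ≫ f ≫ eqToHom q = eqToHom r ≫ (eqToHom s ≫ f ≫ eqToHom t) ≫ eqToHom u := by
  subst_vars; simp

theorem eqToHom_conj_self {X Y : C} (f : X ⟶ Y) (p : X = X) (q : Y = Y) :
    eqToHom p ≫ f ≫ eqToHom q = f := by simp

theorem eqToHom_conj_self₂ {X Y Z : C} (f : X ⟶ Y) (g : Y ⟶ Z) (p : X = X) (q : Z = Z) :
    f ≫ g = eqToHom p ≫ f ≫ g ≫ eqToHom q := by simp

theorem eqToHom_glue_ret {A A' B W X Y Z : C} (f : X ⟶ Y) (g : Y ⟶ Z) (p1 : A = X)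
    (p2 : Y = W) (p3 : W = Y) (p4 : Z = B) (q1 : A = A') (q2 : A' = X) (q3 : Z = B) :
    (eqToHom p1 ≫ f ≫ eqToHom p2) ≫ eqToHom p3 ≫ g ≫ eqToHom p4 =
      eqToHom q1 ≫ eqToHom q2 ≫ f ≫ g ≫ eqToHom q3 := by
  subst_vars; simp

theorem eqToHom_conj_two {X X' Y : C} (f : X ⟶ Y) (a : X = X') (b : X' = X) (c : Y = Y) :
    f = eqToHom a ≫ eqToHom b ≫ f ≫ eqToHom c := by
  subst_vars; simp

theorem eqToHom_conj_three {X X' X'' Y : C} (f : X ⟶ Y) (a : X = X') (b : X' = X'')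
    (d : X'' = X) (c : Y = Y) :
    f = eqToHom a ≫ eqToHom b ≫ eqToHom d ≫ f ≫ eqToHom c := by
  subst_vars; simp

section Glue

variable {n m : ℕ} (cn : CyclicChain C n) (cm : CyclicChain C (m + 1))

/-- Objects of the glued chain. -/
def glueObj (k : ℕ) (hk : k ≤ n + m) : C :=
  if h : k ≤ n then cn.obj k h else cm.obj (k - n + 1) (by omega)

theorem glueObj_left (k : ℕ) (hk : k ≤ n + m) (h : k ≤ n) :
    glueObj cn cm k hk = cn.obj k h := dif_pos h

theorem glueObj_right (k : ℕ) (hk : k ≤ n + m) (h : ¬ k ≤ n) :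
    glueObj cn cm k hk = cm.obj (k - n + 1) (by omega) := dif_neg h

theorem glueObj_right' (e1 : cn.obj n le_rfl = cm.obj 1 (by omega))
    (k : ℕ) (hk : k ≤ n + m) (h : n ≤ k) :
    glueObj cn cm k hk = cm.obj (k - n + 1) (by omega) := by
  by_cases h' : k ≤ n
  · obtain rfl : n = k := le_antisymm h h'
    rw [glueObj_left cn cm n hk le_rfl, e1]
    exact cm.obj_congr (by omega) _ _
  · exact glueObj_right cn cm k hk h'

variable (e0 : cn.obj 0 (Nat.zero_le n) = cm.obj 0 (Nat.zero_le (m + 1)))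
  (e1 : cn.obj n le_rfl = cm.obj 1 (by omega))

/-- The chain glued from a cyclic `n`-chain and a cyclic `(m+1)`-chain. -/
def glue : CyclicChain C (n + m) where
  obj := glueObj cn cm
  map k hk :=
    if h : k + 1 ≤ n then
      eqToHom (glueObj_left cn cm k (by omega) (by omega)) ≫ cn.map k (by omega) ≫
        eqToHom (glueObj_left cn cm (k + 1) (by omega) h).symm
    else
      eqToHom (glueObj_right' cn cm e1 k (by omega) (by omega)) ≫
        cm.map (k - n + 1) (by omega) ≫
        eqToHom ((glueObj_right cn cm (k + 1) (by omega) h).trans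
          (cm.obj_congr (by omega) _ _)).symm
  ret :=
    eqToHom ((glueObj_right' cn cm e1 (n + m) le_rfl (by omega)).trans
        (cm.obj_congr (by omega) _ _)) ≫ cm.ret ≫
      eqToHom ((glueObj_left cn cm 0 (by omega) (by omega)).trans e0).symm

theorem glue_map_left (k : ℕ) (hk : k < n + m) (h : k + 1 ≤ n) :
    (glue cn cm e0 e1).map k hk =
      eqToHom (glueObj_left cn cm k (by omega) (by omega)) ≫ cn.map k (by omega) ≫
        eqToHom (glueObj_left cn cm (k + 1) (by omega) h).symm := dif_pos h

theorem glue_map_right (k : ℕ) (hk : k < n + m) (h : ¬ k + 1 ≤ n) :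
    (glue cn cm e0 e1).map k hk =
      eqToHom (glueObj_right' cn cm e1 k (by omega) (by omega)) ≫
        cm.map (k - n + 1) (by omega) ≫
        eqToHom ((glueObj_right cn cm (k + 1) (by omega) h).trans
          (cm.obj_congr (by omega) _ _)).symm := dif_neg h

theorem glue_ret :
    (glue cn cm e0 e1).ret =
      eqToHom ((glueObj_right' cn cm e1 (n + m) le_rfl (by omega)).trans
          (cm.obj_congr (by omega) _ _)) ≫ cm.ret ≫
        eqToHom ((glueObj_left cn cm 0 (by omega) (by omega)).trans e0).symm := rfl

theorem glue_comp_left :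
    (glue cn cm e0 e1).comp 0 n (Nat.zero_le n) (by omega) =
      eqToHom (glueObj_left cn cm 0 (by omega) (by omega)) ≫
        cn.comp 0 n (Nat.zero_le n) le_rfl ≫
        eqToHom (glueObj_left cn cm n (by omega) le_rfl).symm := by
  have h := CyclicChain.comp_congr_shift (glue cn cm e0 e1) cn 0 0 n (Nat.zero_le n) le_rfl
    (by omega)
    (fun k h1 hk => ((glueObj_left cn cm (0 + k) (by omega) (by omega)).trans
      (cn.obj_congr (by omega) (by omega) hk)).symm)
    (fun k h1 h2 => by
      rw [glue_map_left cn cm e0 e1 (0 + k) (by omega) (by omega),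
        cn.map_idx (show k = 0 + k by omega) (by omega) (by omega)]
      exact eqToHom_sandwich _ _ _ _ _ _ _)
  rw [CyclicChain.comp_idx (glue cn cm e0 e1) (show 0 + 0 = 0 by omega)
    (show 0 + n = n by omega) (by omega) (by omega) (by omega) (by omega)] at h
  rw [h]
  simp
  exact eqToHom_conj_two _ _ _ _

theorem glue_comp_right (hn : 1 ≤ n) :
    (glue cn cm e0 e1).comp n (n + m) (by omega) le_rfl =
      eqToHom ((glueObj_left cn cm n (by omega) le_rfl).trans e1) ≫
        cm.comp 1 (m + 1) (by omega) le_rfl ≫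
        eqToHom ((glueObj_right' cn cm e1 (n + m) le_rfl (by omega)).trans
          (cm.obj_congr (by omega) _ _)).symm := by
  have h := CyclicChain.comp_congr_shift (glue cn cm e0 e1) cm (n - 1) 1 (m + 1)
    (by omega) le_rfl (by omega)
    (fun k h1 hk => ((glueObj_right' cn cm e1 (n - 1 + k) (by omega) (by omega)).trans
      (cm.obj_congr (by omega) (by omega) hk)).symm)
    (fun k h1 h2 => by
      rw [glue_map_right cn cm e0 e1 (n - 1 + k) (by omega) (by omega),
        cm.map_idx (show k = n - 1 + k - n + 1 by omega) (by omega) (by omega)]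
      exact eqToHom_sandwich _ _ _ _ _ _ _)
  rw [CyclicChain.comp_idx (glue cn cm e0 e1) (show n - 1 + 1 = n by omega)
    (show n - 1 + (m + 1) = n + m by omega) (by omega) (by omega) (by omega) le_rfl] at h
  rw [h]
  simp
  exact eqToHom_conj_three _ _ _ _ _

end Glue

theorem segal_fst_comp {n m : ℕ} (c : CyclicChain C (n + m)) :
    (cyclicSegalMap n m c).1.comp 0 n (Nat.zero_le n) le_rfl =
      c.comp 0 n (Nat.zero_le n) (by omega) := by
  have h := CyclicChain.comp_congr_shift c (cyclicSegalMap n m c).1 0 0 n (Nat.zero_le n)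
    le_rfl (by omega)
    (fun k h1 hk => c.obj_congr (show k = 0 + k by omega) (by omega) (by omega))
    (fun k h1 h2 => c.map_idx (show k = 0 + k by omega) (by omega) (by omega))
  rw [CyclicChain.comp_idx c (show 0 + 0 = 0 by omega) (show 0 + n = n by omega)
    (by omega) (by omega) (by omega) (by omega)] at h
  rw [h]
  simp
  exact eqToHom_conj_self _ _ _

theorem segal_snd_comp {n m : ℕ} (hn : 1 ≤ n) (c : CyclicChain C (n + m)) :
    (cyclicSegalMap n m c).2.comp 1 (m + 1) (by omega) le_rfl =
      c.comp n (n + m) (by omega) le_rfl := by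
  have h := CyclicChain.comp_congr_shift c (cyclicSegalMap n m c).2 (n - 1) 1 (m + 1)
    (by omega) le_rfl (by omega)
    (fun k h1 hk => by
      obtain ⟨j, rfl⟩ : ∃ j, k = j + 1 := ⟨k - 1, by omega⟩
      exact c.obj_congr (show n + j = n - 1 + (j + 1) by omega) (by omega) (by omega))
    (fun k h1 h2 => by
      obtain ⟨j, rfl⟩ : ∃ j, k = j + 1 := ⟨k - 1, by omega⟩
      exact c.map_idx (show n + j = n - 1 + (j + 1) by omega) (by omega) (by omega))
  rw [CyclicChain.comp_idx c (show n - 1 + 1 = n by omega)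
    (show n - 1 + (m + 1) = n + m by omega) (by omega) (by omega) (by omega) le_rfl] at h
  rw [h]
  simp
  exact eqToHom_conj_self _ _ _
/-- For a small category `C` and `n, m ≥ 1`, the `2`-Segal map `Φ` of the cyclic
nerve of `C` associated with the subdivision of the `(n+m+1)`-gon along the diagonal `{0, n}` is
injective, and its image consists exactly of the pairs of a cyclic `n`-chain
`(y_•; g_•)` and a cyclic `(m+1)`-chain `(z_•; h_•)` with `y_0 = z_0`, `y_n = z_1`,
`g_{n-1} ∘ ⋯ ∘ g_0 = h_0` and `g_n = h_{m+1} ∘ ⋯ ∘ h_1`. -/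
theorem cyclicNerve_twoSegal (C : Type u) [SmallCategory C] (n m : ℕ)
    (hn : 1 ≤ n) (hm : 1 ≤ m) :
    Function.Injective (cyclicSegalMap (C := C) n m) ∧
    ∀ (cn : CyclicChain C n) (cm : CyclicChain C (m + 1)),
      (cn, cm) ∈ Set.range (cyclicSegalMap (C := C) n m) ↔
        ∃ (e0 : cn.obj 0 (Nat.zero_le n) = cm.obj 0 (Nat.zero_le (m + 1)))
          (e1 : cn.obj n le_rfl = cm.obj 1 (by omega)),
          cn.comp 0 n (Nat.zero_le n) le_rfl
              = eqToHom e0 ≫ cm.map 0 (by omega) ≫ eqToHom e1.symm ∧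
          cn.ret = eqToHom e1 ≫ cm.comp 1 (m + 1) (by omega) le_rfl ≫ cm.ret
              ≫ eqToHom e0.symm := by
  constructor
  · -- injectivity
    intro c1 c2 h
    have h1 : (cyclicSegalMap n m c1).1 = (cyclicSegalMap n m c2).1 := congrArg Prod.fst h
    have h2 : (cyclicSegalMap n m c1).2 = (cyclicSegalMap n m c2).2 := congrArg Prod.snd h
    have hobj : ∀ k (hk : k ≤ n + m), c1.obj k hk = c2.obj k hk := by
      intro k hk
      by_cases hkn : k ≤ n
      · exact CyclicChain.obj_eq_of_eq h1 k hkn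
      · obtain ⟨j, rfl⟩ : ∃ j, k = n + j := ⟨k - n, by omega⟩
        exact CyclicChain.obj_eq_of_eq h2 (j + 1) (by omega)
    have hmap : ∀ k (hk : k < n + m), c1.map k hk =
        eqToHom (hobj k hk.le) ≫ c2.map k hk ≫ eqToHom (hobj (k + 1) hk).symm := by
      intro k hk
      by_cases hkn : k < n
      · exact CyclicChain.map_eq_of_eq h1 k hkn
      · obtain ⟨j, rfl⟩ : ∃ j, k = n + j := ⟨k - n, by omega⟩
        exact CyclicChain.map_eq_of_eq h2 (j + 1) (by omega)
    exact CyclicChain.ext' hobj hmap (CyclicChain.ret_eq_of_eq h2)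
  · -- image
    intro cn cm
    constructor
    · rintro ⟨c, hc⟩
      have h1 : (cyclicSegalMap n m c).1 = cn := by rw [hc]
      have h2 : (cyclicSegalMap n m c).2 = cm := by rw [hc]
      subst h1; subst h2
      refine ⟨rfl, rfl, ?_, ?_⟩
      · rw [segal_fst_comp]
        exact (eqToHom_conj_self _ _ _).symm
      · rw [segal_snd_comp hn]
        exact eqToHom_conj_self₂ _ _ _ _
    · rintro ⟨e0, e1, cond1, cond2⟩
      refine ⟨glue cn cm e0 e1, ?_⟩
      have hgfst : (cyclicSegalMap n m (glue cn cm e0 e1)).1 = cn := by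
        refine CyclicChain.ext' (fun k hk => glueObj_left cn cm k (by omega) hk)
          (fun k hk => glue_map_left cn cm e0 e1 k (by omega) (by omega)) ?_
        show (glue cn cm e0 e1).comp n (n + m) (by omega) le_rfl ≫
          (glue cn cm e0 e1).ret = _
        rw [glue_comp_right cn cm e0 e1 hn, glue_ret cn cm e0 e1, cond2]
        simp
        exact eqToHom_glue_ret _ _ _ _ _ _ _ _ _
      have hgsnd : (cyclicSegalMap n m (glue cn cm e0 e1)).2 = cm := by
        refine CyclicChain.ext' (fun k hk => ?_) (fun k hk => ?_) ?_
        · match k, hk with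
          | 0, hk => exact (glueObj_left cn cm 0 (by omega) (by omega)).trans e0
          | j + 1, hk =>
            exact (glueObj_right' cn cm e1 (n + j) (by omega) (by omega)).trans
              (cm.obj_congr (by omega) _ _)
        · match k, hk with
          | 0, hk =>
            refine Eq.trans (glue_comp_left cn cm e0 e1) ?_
            rw [cond1]
            exact (eqToHom_sandwich _ _ _ _ _ _ _).symm
          | j + 1, hk =>
            refine Eq.trans (glue_map_right cn cm e0 e1 (n + j) (by omega) (by omega)) ?_
            rw [cm.map_idx (show n + j - n + 1 = j + 1 by omega) (by omega) (by omega)]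
            exact (eqToHom_sandwich _ _ _ _ _ _ _).symm
        · exact glue_ret cn cm e0 e1
      exact Prod.ext hgfst hgsnd
end

section
/- In the free category 𝒬^n on the circular quiver Q^n, for every morphism f : i → j one has f ∘ w_i = w_j ∘ f, where w_i denotes the composite of the n+1 generating arrows around the full cycle starting and ending at i. Consequently the family (w_i)_{i ∈ ℤ/(n+1)} is a natural transformation from the identity functor of 𝒬^n to itself, making 𝒬^n a Λ-category. -/
open CategoryTheory

lemma cons_hcongr {V : Type*} [Quiver V] {a b b' c c' : V} (hb : b = b') (hc : c = c')
    {p : Quiver.Path a b} {p' : Quiver.Path a b'} (hp : HEq p p')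
    {e : b ⟶ c} {e' : b' ⟶ c'} (he : HEq e e') : HEq (p.cons e) (p'.cons e') := by
  subst hb; subst hc; cases hp; cases he; rfl

lemma comp_hcongr {V : Type*} [Quiver V] {a b c c' : V} (hc : c = c')
    {p : Quiver.Path a b} {q : Quiver.Path b c} {q' : Quiver.Path b c'} (hq : HEq q q') :
    HEq (p.comp q) (p.comp q') := by
  subst hc; cases hq; rfl

lemma arrow_hcongr (n : ℕ) {b b' c c' : CircVert n} (hb : b = b') (hc : c = c')
    (e : b ⟶ c) (e' : b' ⟶ c') : HEq e e' := by
  subst hb; subst hc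
  exact heq_of_eq (@Subsingleton.elim (PLift (c = b + 1)) _ e e')

lemma wrapz (n : ℕ) : (n : ZMod (n + 1)) + 1 = 0 := by
  have := ZMod.natCast_self (n + 1)
  push_cast at this
  exact this

lemma arc_shift (n : ℕ) (i : CircVert n) (k : ℕ) :
    HEq (arc n i (k + 1))
      ((Quiver.Hom.toPath (⟨rfl⟩ : i ⟶ i + 1)).comp (arc n (i + 1) k)) := by
  induction k with
  | zero =>
      refine HEq.trans (b := (Quiver.Path.nil : Quiver.Path i i).cons
        (⟨rfl⟩ : i ⟶ i + 1)) ?_ ?_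
      · show HEq ((arc n i 0).cons _) _
        exact cons_hcongr (by simp) (by push_cast; ring)
          (Quiver.Path.cast_heq _ _ _) (arrow_hcongr n (by simp) (by push_cast; ring) _ _)
      · refine HEq.symm (HEq.trans (comp_hcongr (by simp) (Quiver.Path.cast_heq _ _ _)) ?_)
        rw [Quiver.Path.comp_nil]
        rfl
  | succ k ih =>
      show HEq ((arc n i (k + 1)).cons _)
        (((Quiver.Hom.toPath (⟨rfl⟩ : i ⟶ i + 1)).comp (arc n (i + 1) k)).cons _)
      exact cons_hcongr (by push_cast; ring) (by push_cast; ring) ih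
        (arrow_hcongr n (by push_cast; ring) (by push_cast; ring) _ _)

lemma cycle_nat_arrow (n : ℕ) (b : CircVert n) :
    cycleW n b ≫ genHom n b = genHom n b ≫ cycleW n (b + 1) := by
  have hc2 : (b : ZMod (n+1)) + 1 = b + ((n + 1 + 1 : ℕ) : ZMod (n + 1)) := by
    push_cast
    linear_combination -(wrapz n)
  have hL : HEq (cycleW n b ≫ genHom n b) (arc n b (n + 1 + 1)) := by
    show HEq ((cycleW n b).cons ⟨rfl⟩) ((arc n b (n + 1)).cons _)
    exact cons_hcongr (by simp) hc2
      (Quiver.Path.cast_heq _ _ _) (arrow_hcongr n (by simp) hc2 _ _)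
  have hR : HEq (genHom n b ≫ cycleW n (b + 1)) (arc n b (n + 1 + 1)) := by
    show HEq ((Quiver.Hom.toPath (⟨rfl⟩ : b ⟶ b + 1)).comp (cycleW n (b + 1))) _
    refine HEq.symm (HEq.trans (arc_shift n b (n + 1)) ?_)
    exact comp_hcongr (by simp) (HEq.symm (Quiver.Path.cast_heq _ _ _))
  exact eq_of_heq (hL.trans hR.symm)

lemma cycle_nat (n : ℕ) (i j : CircVert n) (f : vtx i ⟶ vtx j) :
    cycleW n i ≫ f = f ≫ cycleW n j := by
  refine Paths.induction_fixed_source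
    (P := fun {b} (g : vtx i ⟶ b) => cycleW n i ≫ g = g ≫ cycleW n b) ?_ ?_ f
  · simp
  · intro u v p q ih
    obtain ⟨h⟩ := q
    subst h
    have harr : ((Paths.of (CircVert n)).map (⟨rfl⟩ : u ⟶ u + 1) : vtx u ⟶ vtx (u + 1)) = genHom n u := rfl
    show cycleW n i ≫ ((p : vtx i ⟶ vtx u) ≫ genHom n u) = (p ≫ genHom n u) ≫ cycleW n (u + 1)
    exact (Category.assoc _ _ _).symm.trans ((congrArg (· ≫ genHom n u) ih).trans
      ((Category.assoc _ _ _).trans ((congrArg (p ≫ ·) (cycle_nat_arrow n u)).trans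
        (Category.assoc _ _ _).symm)))

/-- In the free category `𝒬ⁿ` on the circular quiver `Qⁿ`, every morphism
`f : i ⟶ j` satisfies `f ∘ w_i = w_j ∘ f` (written diagrammatically: `w_i ≫ f = f ≫ w_j`),
where `w_i` is the composite of the `n+1` generating arrows around the full cycle starting and
ending at `i`.  Consequently the family `(w_i)` is a natural transformation from the identity
functor of `𝒬ⁿ` to itself, making `𝒬ⁿ` a `Λ`-category. -/
theorem full_cycle_natural (n : ℕ) :
    (∀ (i j : CircVert n) (f : vtx i ⟶ vtx j), cycleW n i ≫ f = f ≫ cycleW n j) ∧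
    (∃ W : 𝟭 (Paths (CircVert n)) ⟶ 𝟭 (Paths (CircVert n)),
      ∀ i : CircVert n, W.app (vtx i) = cycleW n i) := by
  
  refine ⟨cycle_nat n, ⟨{ app := fun i => cycleW n i, naturality := ?_ }, fun i => rfl⟩⟩
  intro i j f
  simpa using (cycle_nat n i j f).symm
end
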